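/- arXiv:1503.00192 — 5 statements merged into one kernel-verified Lean document; each statement's English description precedes it below -/
import Mathlib

section
/- If a sequence of measurable sets E_n in R^d of finite perimeter converges locally to a set E and |E_n| → |E| < ∞, then E_n → E globally, i.e., |E_n Δ E| → 0. -/
open MeasureTheory Filter Metric Set Topology

noncomputable section

/-- De Giorgi perimeter: the set of values `∫_E div F` over admissible vector fields. -/
def perSet (d : ℕ) (E : Set (EuclideanSpace ℝ (Fin d))) : Set ℝ :=
  {p | ∃ F : EuclideanSpace ℝ (Fin d) → EuclideanSpace ℝ (Fin d),
      ContDiff ℝ 1 F ∧ HasCompactSupport F ∧ (∀ x, ‖F x‖ ≤ 1) ∧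
      p = ∫ x in E, ∑ i, fderiv ℝ F x (EuclideanSpace.single i (1:ℝ)) i}

/-- De Giorgi perimeter of a measurable set. -/
def perimeter (d : ℕ) (E : Set (EuclideanSpace ℝ (Fin d))) : ℝ := sSup (perSet d E)

/-- A set has finite perimeter if the defining supremum is finite. -/
def FinitePerimeter (d : ℕ) (E : Set (EuclideanSpace ℝ (Fin d))) : Prop := BddAbove (perSet d E)

/-- Riesz interaction energy. -/
def riesz (d : ℕ) (l : ℝ) (A : Set (EuclideanSpace ℝ (Fin d))) : ℝ :=
  (1/2) * ∫ x in A, ∫ y in A, ‖x - y‖ ^ (-l)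

abbrev E3 := EuclideanSpace ℝ (Fin 3)

/-- Coulomb self-energy in dimension 3. -/
def coulomb (Ω : Set E3) : ℝ := (1/2) * ∫ x in Ω, ∫ y in Ω, ‖x - y‖⁻¹

/-- Liquid drop energy. -/
def ldEnergy (Ω : Set E3) : ℝ := perimeter 3 Ω + coulomb Ω

/-- Minimal liquid drop energy at mass `A`. -/
def ldE (A : ℝ) : ℝ :=
  sInf {e | ∃ Ω : Set E3, MeasurableSet Ω ∧ FinitePerimeter 3 Ω ∧
      volume Ω = ENNReal.ofReal A ∧ e = ldEnergy Ω}


/-- local convergence plus convergence of measures implies global convergence. -/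
theorem global_convergence_of_local (d : ℕ)
    (E : ℕ → Set (EuclideanSpace ℝ (Fin d))) (Elim : Set (EuclideanSpace ℝ (Fin d)))
    (hmeas : ∀ n, MeasurableSet (E n)) (hfp : ∀ n, FinitePerimeter d (E n))
    (hml : MeasurableSet Elim) (hEfin : volume Elim < ⊤)
    (hloc : ∀ K : Set (EuclideanSpace ℝ (Fin d)), IsCompact K →
      Tendsto (fun n => volume (symmDiff (E n) Elim ∩ K)) atTop (𝓝 0))
    (hvol : Tendsto (fun n => volume (E n)) atTop (𝓝 (volume Elim))) :
    Tendsto (fun n => volume (symmDiff (E n) Elim)) atTop (𝓝 0) := by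
  rw [ENNReal.tendsto_nhds_zero]
  intro ε hε
  set δ : ENNReal := min ε 1 / 8 with hδdef
  have hδ0 : 0 < δ := ENNReal.div_pos (by simp [lt_min_iff, hε, pos_iff_ne_zero.mp]) (by norm_num)
  -- choose a ball B with volume (Elim \ B) < δ
  have hinter : (⋂ n : ℕ, Elim \ Metric.closedBall (0 : EuclideanSpace ℝ (Fin d)) n) = ∅ := by
    rw [← Set.diff_iUnion]
    have : (⋃ n : ℕ, Metric.closedBall (0 : EuclideanSpace ℝ (Fin d)) n) = Set.univ := by
      ext x
      simp only [Set.mem_iUnion, Metric.mem_closedBall, Set.mem_univ, iff_true]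
      obtain ⟨n, hn⟩ := exists_nat_ge (dist x 0)
      exact ⟨n, hn⟩
    simp [this]
  have htend : Tendsto (fun n : ℕ => volume (Elim \ Metric.closedBall 0 n)) atTop
      (𝓝 (volume (⋂ n : ℕ, Elim \ Metric.closedBall (0 : EuclideanSpace ℝ (Fin d)) n))) := by
    refine tendsto_measure_iInter_atTop
      (fun n => (hml.diff measurableSet_closedBall).nullMeasurableSet)
      (fun m n hmn => Set.diff_subset_diff_right (Metric.closedBall_subset_closedBall
        (by exact_mod_cast hmn))) ?_
    exact ⟨0, ((measure_mono Set.diff_subset).trans_lt hEfin).ne⟩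
  rw [hinter] at htend
  simp only [measure_empty] at htend
  have hR : ∃ R : ℕ, volume (Elim \ Metric.closedBall (0 : EuclideanSpace ℝ (Fin d)) R) < δ :=
    (htend.eventually_lt_const hδ0).exists
  obtain ⟨R, hRlt⟩ := hR
  set B : Set (EuclideanSpace ℝ (Fin d)) := Metric.closedBall 0 R with hBdef
  have h1 : ∀ᶠ n in atTop, volume (symmDiff (E n) Elim ∩ B) < δ :=
    (hloc B (isCompact_closedBall 0 R)).eventually_lt_const hδ0
  have h2 : ∀ᶠ n in atTop, volume (E n) < volume Elim + δ :=
    hvol.eventually_lt_const (ENNReal.lt_add_right hEfin.ne hδ0.ne')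
  filter_upwards [h1, h2] with n ha hb
  have hBfin : volume (E n ∩ B) ≠ ⊤ :=
    ((measure_mono Set.inter_subset_right).trans_lt measure_closedBall_lt_top).ne
  -- key estimate on volume (E n \ B)
  have key : volume (E n \ B) ≤ δ + δ + δ := by
    have h3 : volume (Elim ∩ B) ≤ volume (E n ∩ B) + volume (symmDiff (E n) Elim ∩ B) := by
      refine (measure_mono ?_).trans (measure_union_le _ _)
      intro x ⟨hx1, hx2⟩
      by_cases hxE : x ∈ E n
      · exact Or.inl ⟨hxE, hx2⟩
      · exact Or.inr ⟨Or.inr ⟨hx1, hxE⟩, hx2⟩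
    have h4 : volume (E n ∩ B) + volume (E n \ B) = volume (E n) :=
      measure_inter_add_diff _ measurableSet_closedBall
    have h5 : volume (Elim ∩ B) + volume (Elim \ B) = volume Elim :=
      measure_inter_add_diff _ measurableSet_closedBall
    have h6 : volume (E n ∩ B) + volume (E n \ B)
        ≤ volume (E n ∩ B) + (δ + δ + δ) := by
      calc volume (E n ∩ B) + volume (E n \ B) = volume (E n) := h4
        _ ≤ volume Elim + δ := hb.le
        _ = volume (Elim ∩ B) + volume (Elim \ B) + δ := by rw [h5]
        _ ≤ (volume (E n ∩ B) + volume (symmDiff (E n) Elim ∩ B)) + volume (Elim \ B) + δ := by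
            gcongr
        _ ≤ (volume (E n ∩ B) + δ) + δ + δ :=
            add_le_add (add_le_add (add_le_add_right ha.le _) hRlt.le) le_rfl
        _ = volume (E n ∩ B) + (δ + δ + δ) := by ring
    exact (ENNReal.add_le_add_iff_left hBfin).mp h6
  -- split the symmetric difference
  have hsplit : symmDiff (E n) Elim ⊆ (symmDiff (E n) Elim ∩ B) ∪ (E n \ B) ∪ (Elim \ B) := by
    intro x hx
    by_cases hxB : x ∈ B
    · exact Or.inl (Or.inl ⟨hx, hxB⟩)
    · rcases hx with ⟨hx1, _⟩ | ⟨hx1, _⟩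
      · exact Or.inl (Or.inr ⟨hx1, hxB⟩)
      · exact Or.inr ⟨hx1, hxB⟩
  calc volume (symmDiff (E n) Elim)
      ≤ volume (symmDiff (E n) Elim ∩ B) + volume (E n \ B) + volume (Elim \ B) := by
        refine (measure_mono hsplit).trans ?_
        exact (measure_union_le _ _).trans (by gcongr; exact measure_union_le _ _)
    _ ≤ δ + (δ + δ + δ) + δ := add_le_add (add_le_add ha.le key) hRlt.le
    _ ≤ 8 * δ := by
        rw [show δ + (δ + δ + δ) + δ = 5 * δ by ring]
        exact mul_le_mul_left (by norm_num) δ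
    _ = min ε 1 := by
        rw [hδdef, ENNReal.mul_div_cancel' (by norm_num) (by norm_num)]
    _ ≤ ε := min_le_left _ _
end
end

section
/- Let 0 < λ < d and let (F_n), (G_n) be sequences of measurable sets in R^d with uniformly bounded measure and |F_n ∩ G_n| = 0 for all n. Suppose F_n → E globally and G_n → ∅ locally for some set E of finite measure. Then I_λ(F_n ∪ G_n) − I_λ(F_n) − I_λ(G_n) → 0 and I_λ(F_n) → I_λ(E), where I_λ(A) = (1/2) ∬_{A×A} |x−y|^{−λ} dx dy. -/
open MeasureTheory Filter Metric Set Topology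
open scoped ENNReal NNReal

noncomputable section

namespace RSplit
variable {d : ℕ}
local notation "Pt" => EuclideanSpace ℝ (Fin d)

def ker (l : ℝ) (x y : Pt) : ℝ≥0∞ := ENNReal.ofReal (‖x - y‖ ^ (-l))

lemma ker_symm (l : ℝ) (x y : Pt) : ker l x y = ker l y x := by
  simp [ker, norm_sub_rev]

lemma measurable_ker (l : ℝ) : Measurable (fun p : Pt × Pt => ker l p.1 p.2) :=
  Measurable.ennreal_ofReal
    ((measurable_fst.sub measurable_snd).norm.pow measurable_const)

def J (l : ℝ) (A B : Set Pt) : ℝ≥0∞ := ∫⁻ x in A, ∫⁻ y in B, ker l x y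

lemma measurable_inner (l : ℝ) (B : Set Pt) :
    Measurable (fun x : Pt => ∫⁻ y in B, ker l x y) :=
  Measurable.lintegral_prod_right (measurable_ker l)

lemma J_mono {l : ℝ} {A A' B B' : Set Pt} (hA : A ⊆ A') (hB : B ⊆ B') :
    J l A B ≤ J l A' B' := by
  refine le_trans (lintegral_mono fun x => lintegral_mono_set hB) ?_
  exact lintegral_mono' (Measure.restrict_mono hA le_rfl) le_rfl

lemma J_symm (l : ℝ) (A B : Set Pt) : J l A B = J l B A := by
  rw [J, lintegral_lintegral_swap (measurable_ker l).aemeasurable]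
  exact lintegral_congr fun y => lintegral_congr fun x => ker_symm l x y

lemma ae_eq_diff {A B : Set Pt} (hAB : volume (A ∩ B) = 0) :
    (A : Set Pt) =ᵐ[volume] (A \ B : Set Pt) := by
  rw [ae_eq_set]
  constructor
  · rw [Set.diff_diff_right_self]; exact hAB
  · simp

lemma J_union_right {l : ℝ} (X : Set Pt) {A B : Set Pt} (hB : MeasurableSet B)
    (hAB : volume (A ∩ B) = 0) : J l X (A ∪ B) = J l X A + J l X B := by
  have hinner : ∀ x : Pt, ∫⁻ y in A ∪ B, ker l x y
      = (∫⁻ y in A, ker l x y) + ∫⁻ y in B, ker l x y := by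
    intro x
    rw [← Set.diff_union_self, lintegral_union hB disjoint_sdiff_left,
      setLIntegral_congr (ae_eq_diff hAB).symm]
  rw [J, J, J]
  simp_rw [hinner]
  exact lintegral_add_left (measurable_inner l A) _

lemma J_union_left {l : ℝ} {A B : Set Pt} (X : Set Pt) (hB : MeasurableSet B)
    (hAB : volume (A ∩ B) = 0) : J l (A ∪ B) X = J l A X + J l B X := by
  rw [J, ← Set.diff_union_self, lintegral_union hB disjoint_sdiff_left,
    setLIntegral_congr (ae_eq_diff hAB).symm]
  rfl

lemma J_le_const {l : ℝ} {A B : Set Pt} {C : ℝ≥0∞}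
    (hpot : ∀ x : Pt, ∫⁻ y in B, ker l x y ≤ C) : J l A B ≤ C * volume A := by
  calc J l A B ≤ ∫⁻ _ in A, C := lintegral_mono fun x => hpot x
    _ = C * volume A := setLIntegral_const _ _

lemma lintegral_ker_ball_lt_top (hd : 0 < d) {l : ℝ} (hl : 0 < l) (hld : l < d) :
    ∫⁻ z in ball (0 : Pt) 1, ENNReal.ofReal (‖z‖ ^ (-l)) < ⊤ := by
  classical
  have hnt : Nontrivial Pt := by
    refine Module.nontrivial_of_finrank_pos (R := ℝ) ?_
    rw [finrank_euclideanSpace_fin]; exact hd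
  set V := volume (ball (0 : Pt) 1) with hVdef
  have hVlt : V < ⊤ := measure_ball_lt_top
  set A : ℕ → Set Pt := fun k => ball 0 ((2:ℝ) ^ (-(k:ℝ))) \ ball 0 ((2:ℝ) ^ (-(k:ℝ) - 1))
    with hAdef
  have hcover : ball (0 : Pt) 1 ⊆ {0} ∪ ⋃ k, A k := by
    intro z hz
    rcases eq_or_ne z 0 with h0 | h0
    · exact Or.inl (by simp [h0])
    · have hz0 : 0 < ‖z‖ := norm_pos_iff.2 h0
      have hz1 : ‖z‖ < 1 := by simpa [mem_ball, dist_zero_right] using hz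
      have hex : ∃ m : ℕ, (2:ℝ) ^ (-(m:ℝ) - 1) ≤ ‖z‖ := by
        obtain ⟨n, hn⟩ := exists_pow_lt_of_lt_one hz0 (by norm_num : (1:ℝ)/2 < 1)
        refine ⟨n, le_of_lt (lt_trans ?_ hn)⟩
        have h1 : ((1:ℝ)/2) ^ n = (2:ℝ) ^ (-(n:ℝ)) := by
          rw [Real.rpow_neg (by norm_num : (0:ℝ) ≤ 2), Real.rpow_natCast]
          simp [one_div, inv_pow]
        rw [h1]
        exact Real.rpow_lt_rpow_of_exponent_lt one_lt_two (by linarith)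
      set k := Nat.find hex with hkdef
      have hk1 : (2:ℝ) ^ (-(k:ℝ) - 1) ≤ ‖z‖ := Nat.find_spec hex
      have hk2 : ‖z‖ < (2:ℝ) ^ (-(k:ℝ)) := by
        rcases Nat.eq_zero_or_pos k with h | h
        · rw [h]; simpa using hz1
        · have hmin := Nat.find_min hex (show k - 1 < k by omega)
          push_neg at hmin
          have : (-(↑(k-1):ℝ) - 1) = -(k:ℝ) := by
            have : ((k - 1 : ℕ) : ℝ) = (k:ℝ) - 1 := by
              push_cast [Nat.cast_sub h]; ring
            rw [this]; ring
          rwa [this] at hmin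
      refine Or.inr (mem_iUnion.2 ⟨k, ?_, ?_⟩)
      · simpa [mem_ball, dist_zero_right] using hk2
      · simp only [mem_ball, dist_zero_right, not_lt]
        exact hk1
  have key : ∫⁻ z in ball (0 : Pt) 1, ENNReal.ofReal (‖z‖ ^ (-l)) ≤
      ∑' k : ℕ, ENNReal.ofReal ((2:ℝ) ^ ((-(k:ℝ) - 1) * (-l))) *
        (ENNReal.ofReal (((2:ℝ) ^ (-(k:ℝ))) ^ d) * V) := by
    refine le_trans (lintegral_mono_set hcover) ?_
    refine le_trans (lintegral_union_le _ _ _) ?_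
    have h0 : ∫⁻ z in ({0} : Set Pt), ENNReal.ofReal (‖z‖ ^ (-l)) = 0 := by
      rw [lintegral_singleton]
      simp [Real.zero_rpow (neg_ne_zero.2 hl.ne')]
    rw [h0, zero_add]
    refine le_trans (lintegral_iUnion_le _ _) (ENNReal.tsum_le_tsum fun k => ?_)
    have hAm : MeasurableSet (A k) := measurableSet_ball.diff measurableSet_ball
    have hconst : ∀ z ∈ A k, ENNReal.ofReal (‖z‖ ^ (-l)) ≤
        ENNReal.ofReal ((2:ℝ) ^ ((-(k:ℝ) - 1) * (-l))) := by
      intro z hz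
      refine ENNReal.ofReal_le_ofReal ?_
      rw [Real.rpow_mul (by norm_num : (0:ℝ) ≤ 2)]
      have hzlb : (2:ℝ) ^ (-(k:ℝ) - 1) ≤ ‖z‖ := by
        have := hz.2
        simpa [mem_ball, dist_zero_right, not_lt] using this
      exact Real.rpow_le_rpow_of_nonpos (Real.rpow_pos_of_pos two_pos _) hzlb
        (neg_nonpos.2 hl.le)
    calc ∫⁻ z in A k, ENNReal.ofReal (‖z‖ ^ (-l))
        ≤ ∫⁻ _ in A k, ENNReal.ofReal ((2:ℝ) ^ ((-(k:ℝ) - 1) * (-l))) :=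
          setLIntegral_mono' hAm hconst
      _ = ENNReal.ofReal ((2:ℝ) ^ ((-(k:ℝ) - 1) * (-l))) * volume (A k) :=
          setLIntegral_const _ _
      _ ≤ ENNReal.ofReal ((2:ℝ) ^ ((-(k:ℝ) - 1) * (-l))) *
          (ENNReal.ofReal (((2:ℝ) ^ (-(k:ℝ))) ^ d) * V) := by
          gcongr
          have : volume (A k) ≤ volume (ball (0:Pt) ((2:ℝ) ^ (-(k:ℝ)))) :=
            measure_mono diff_subset
          refine le_trans this ?_
          rw [Measure.addHaar_ball _ _ (Real.rpow_nonneg (by norm_num) _),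
            finrank_euclideanSpace_fin]
  refine lt_of_le_of_lt key ?_
  have hterm : ∀ k : ℕ, ENNReal.ofReal ((2:ℝ) ^ ((-(k:ℝ) - 1) * (-l))) *
      (ENNReal.ofReal (((2:ℝ) ^ (-(k:ℝ))) ^ d) * V) =
      ENNReal.ofReal ((2:ℝ) ^ l) * ENNReal.ofReal ((2:ℝ) ^ (l - (d:ℝ))) ^ k * V := by
    intro k
    have h2 : ((0:ℝ) ≤ 2) := by norm_num
    have hc : ((2:ℝ) ^ (-(k:ℝ))) ^ d = (2:ℝ) ^ (-(k:ℝ) * d) := by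
      rw [Real.rpow_mul h2, Real.rpow_natCast]
    have hmul : (2:ℝ) ^ ((-(k:ℝ) - 1) * (-l)) * (2:ℝ) ^ (-(k:ℝ) * d) =
        (2:ℝ) ^ l * ((2:ℝ) ^ (l - (d:ℝ))) ^ k := by
      rw [← Real.rpow_add two_pos, ← Real.rpow_natCast ((2:ℝ) ^ (l - (d:ℝ))) k,
        ← Real.rpow_mul h2, ← Real.rpow_add two_pos]
      ring_nf
    rw [hc, ← mul_assoc, ← ENNReal.ofReal_mul (Real.rpow_nonneg h2 _), hmul,
      ENNReal.ofReal_mul (Real.rpow_nonneg h2 _),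
      ENNReal.ofReal_pow (Real.rpow_nonneg h2 _)]
  calc (∑' k : ℕ, ENNReal.ofReal ((2:ℝ) ^ ((-(k:ℝ) - 1) * (-l))) *
        (ENNReal.ofReal (((2:ℝ) ^ (-(k:ℝ))) ^ d) * V))
      = (ENNReal.ofReal ((2:ℝ) ^ l) * ∑' k : ℕ,
          ENNReal.ofReal ((2:ℝ) ^ (l - (d:ℝ))) ^ k) * V := by
        simp_rw [hterm]
        rw [ENNReal.tsum_mul_right, ENNReal.tsum_mul_left]
    _ < ⊤ := by
        have hq : ENNReal.ofReal ((2:ℝ) ^ (l - (d:ℝ))) < 1 := by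
          rw [← ENNReal.ofReal_one]
          exact ENNReal.ofReal_lt_ofReal_iff_of_nonneg (Real.rpow_nonneg (by norm_num) _)
            |>.2 (Real.rpow_lt_one_of_one_lt_of_neg one_lt_two (by
              have : (l:ℝ) < (d:ℝ) := by exact_mod_cast hld
              linarith))
        have hsum : (∑' k : ℕ, ENNReal.ofReal ((2:ℝ) ^ (l - (d:ℝ))) ^ k) < ⊤ := by
          rw [ENNReal.tsum_geometric]
          exact ENNReal.inv_lt_top.2 (tsub_pos_of_lt hq)
        exact ENNReal.mul_lt_top
          (ENNReal.mul_lt_top ENNReal.ofReal_lt_top hsum) hVlt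

lemma lintegral_ker_ball (l : ℝ) (x : Pt) :
    ∫⁻ y in ball x 1, ker l x y = ∫⁻ z in ball (0 : Pt) 1, ENNReal.ofReal (‖z‖ ^ (-l)) := by
  have hmp : MeasurePreserving (fun y : Pt => x - y) volume volume :=
    ⟨measurable_const.sub measurable_id, Measure.map_sub_left_eq_self volume x⟩
  have hg : Measurable fun z : Pt => (ball (0:Pt) 1).indicator
      (fun z => ENNReal.ofReal (‖z‖ ^ (-l))) z :=
    (Measurable.ennreal_ofReal (measurable_norm.pow measurable_const)).indicator
      measurableSet_ball
  calc ∫⁻ y in ball x 1, ker l x y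
      = ∫⁻ y, (ball (0:Pt) 1).indicator (fun z => ENNReal.ofReal (‖z‖ ^ (-l))) (x - y) := by
        rw [← lintegral_indicator measurableSet_ball]
        congr 1
        ext y
        by_cases hy : y ∈ ball x 1
        · have h1 : x - y ∈ ball (0:Pt) 1 := by
            simpa [mem_ball, dist_eq_norm, norm_sub_rev] using hy
          rw [indicator_of_mem hy, indicator_of_mem h1, ker]
        · have h1 : x - y ∉ ball (0:Pt) 1 := by
            simp only [mem_ball, dist_zero_right] at *
            intro hc
            exact hy (by simpa [dist_eq_norm, norm_sub_rev] using hc)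
          rw [indicator_of_notMem hy, indicator_of_notMem h1]
    _ = ∫⁻ z, (ball (0:Pt) 1).indicator (fun z => ENNReal.ofReal (‖z‖ ^ (-l))) z :=
        hmp.lintegral_comp hg
    _ = ∫⁻ z in ball (0:Pt) 1, ENNReal.ofReal (‖z‖ ^ (-l)) :=
        lintegral_indicator measurableSet_ball _

lemma pot_bound {l : ℝ} (hl : 0 < l) (M' : ℝ≥0∞) (x : Pt) {B : Set Pt}
    (hB : MeasurableSet B) (hBv : volume B ≤ M') :
    ∫⁻ y in B, ker l x y ≤
      (∫⁻ z in ball (0 : Pt) 1, ENNReal.ofReal (‖z‖ ^ (-l))) + M' := by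
  have hsplit : B = (B ∩ ball x 1) ∪ (B \ ball x 1) := by
    simp [inter_union_diff]
  calc ∫⁻ y in B, ker l x y
      = ∫⁻ y in (B ∩ ball x 1) ∪ (B \ ball x 1), ker l x y := by rw [← hsplit]
    _ ≤ (∫⁻ y in B ∩ ball x 1, ker l x y) + ∫⁻ y in B \ ball x 1, ker l x y :=
        lintegral_union_le _ _ _
    _ ≤ (∫⁻ z in ball (0 : Pt) 1, ENNReal.ofReal (‖z‖ ^ (-l))) + M' := by
        refine add_le_add ?_ ?_
        · rw [← lintegral_ker_ball l x]
          exact lintegral_mono_set inter_subset_right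
        · calc ∫⁻ y in B \ ball x 1, ker l x y
              ≤ ∫⁻ _ in B \ ball x 1, 1 := by
                refine setLIntegral_mono' (hB.diff measurableSet_ball) ?_
                intro y hy
                have h1 : (1:ℝ) ≤ ‖x - y‖ := by
                  have := hy.2
                  rw [norm_sub_rev]
                  simpa [mem_ball, dist_eq_norm, not_lt] using this
                rw [ker, ← ENNReal.ofReal_one]
                exact ENNReal.ofReal_le_ofReal
                  (Real.rpow_le_one_of_one_le_of_nonpos h1 (neg_nonpos.2 hl.le))
            _ = volume (B \ ball x 1) := by rw [setLIntegral_const, one_mul]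
            _ ≤ M' := le_trans (measure_mono diff_subset) hBv

lemma riesz_eq {l : ℝ} {A : Set Pt} (hfin : ∀ x : Pt, (∫⁻ y in A, ker l x y) ≠ ⊤) :
    riesz d l A = (1/2) * (J l A A).toReal := by
  have hg : ∀ x : Pt, (∫ y in A, ‖x - y‖ ^ (-l)) = (∫⁻ y in A, ker l x y).toReal := by
    intro x
    rw [integral_eq_lintegral_of_nonneg_ae
      (ae_of_all _ fun y => Real.rpow_nonneg (norm_nonneg _) _)
      ((measurable_const.sub measurable_id).norm.pow
        measurable_const).aestronglyMeasurable]
    rfl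
  have h2 : (∫ x in A, ∫ y in A, ‖x - y‖ ^ (-l)) = (J l A A).toReal := by
    simp_rw [hg]
    rw [integral_eq_lintegral_of_nonneg_ae
      (ae_of_all _ fun x => ENNReal.toReal_nonneg)
      ((measurable_inner l A).ennreal_toReal).aestronglyMeasurable]
    rw [J]
    congr 1
    exact lintegral_congr fun x => ENNReal.ofReal_toReal (hfin x)
  rw [riesz, h2]

lemma riesz_union {l : ℝ} {F G : Set Pt} (hG : MeasurableSet G)
    (hdisj : volume (F ∩ G) = 0)
    (hfinF : ∀ x : Pt, (∫⁻ y in F, ker l x y) ≠ ⊤)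
    (hfinG : ∀ x : Pt, (∫⁻ y in G, ker l x y) ≠ ⊤)
    (hJF : J l F F ≠ ⊤) (hJG : J l G G ≠ ⊤) (hJFG : J l F G ≠ ⊤) :
    riesz d l (F ∪ G) - riesz d l F - riesz d l G = (J l F G).toReal := by
  have hfinU : ∀ x : Pt, (∫⁻ y in F ∪ G, ker l x y) ≠ ⊤ := by
    intro x
    exact ne_top_of_le_ne_top (ENNReal.add_ne_top.2 ⟨hfinF x, hfinG x⟩)
      (lintegral_union_le _ _ _)
  rw [riesz_eq hfinU, riesz_eq hfinF, riesz_eq hfinG]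
  have hGF : J l G F = J l F G := J_symm l G F
  have hexp : J l (F ∪ G) (F ∪ G) = (J l F F + J l F G) + (J l F G + J l G G) := by
    rw [J_union_left _ hG hdisj, J_union_right _ hG hdisj, J_union_right _ hG hdisj, hGF]
  rw [hexp, ENNReal.toReal_add (ENNReal.add_ne_top.2 ⟨hJF, hJFG⟩)
      (ENNReal.add_ne_top.2 ⟨hJFG, hJG⟩),
    ENNReal.toReal_add hJF hJFG, ENNReal.toReal_add hJFG hJG]
  ring

lemma J_self_le {l : ℝ} {A B : Set Pt} (hA : MeasurableSet A) (hB : MeasurableSet B)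
    {C : ℝ≥0∞}
    (hpot : ∀ (x : Pt) (S : Set Pt), MeasurableSet S → S ⊆ A ∪ B →
      ∫⁻ y in S, ker l x y ≤ C) :
    J l A A ≤ J l B B + 3 * (C * volume (A \ B)) := by
  have hD : MeasurableSet (A \ B) := hA.diff hB
  have hBD : volume (B ∩ (A \ B)) = 0 := by
    have : B ∩ (A \ B) = ∅ := by ext x; simp only [mem_inter_iff, mem_diff,
      mem_empty_iff_false, iff_false]; tauto
    rw [this, measure_empty]
  have hsub : A ⊆ B ∪ (A \ B) := by
    intro x hx
    by_cases hxB : x ∈ B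
    · exact Or.inl hxB
    · exact Or.inr ⟨hx, hxB⟩
  have hDA : (A \ B : Set Pt) ⊆ A ∪ B := fun x hx => Or.inl hx.1
  have hBA : (B : Set Pt) ⊆ A ∪ B := fun x hx => Or.inr hx
  have h1 : J l B (A \ B) ≤ C * volume (A \ B) := by
    rw [J_symm]
    exact J_le_const fun x => hpot x B hB hBA
  have h2 : J l (A \ B) B ≤ C * volume (A \ B) :=
    J_le_const fun x => hpot x B hB hBA
  have h3 : J l (A \ B) (A \ B) ≤ C * volume (A \ B) :=
    J_le_const fun x => hpot x (A \ B) hD hDA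
  calc J l A A ≤ J l (B ∪ (A \ B)) (B ∪ (A \ B)) := J_mono hsub hsub
    _ = (J l B B + J l B (A \ B)) + (J l (A \ B) B + J l (A \ B) (A \ B)) := by
        rw [J_union_left _ hD hBD, J_union_right _ hD hBD, J_union_right _ hD hBD]
    _ ≤ (J l B B + C * volume (A \ B)) + (C * volume (A \ B) + C * volume (A \ B)) := by
        exact add_le_add (add_le_add le_rfl h1) (add_le_add h2 h3)
    _ = J l B B + 3 * (C * volume (A \ B)) := by ring

end RSplit

open RSplit

/-- asymptotic additivity of the Riesz energy along the dichotomy. -/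
theorem riesz_energy_splitting (d : ℕ) (hd : 0 < d) (l : ℝ) (hl : 0 < l) (hld : l < d)
    (F G : ℕ → Set (EuclideanSpace ℝ (Fin d))) (Elim : Set (EuclideanSpace ℝ (Fin d)))
    (hFm : ∀ n, MeasurableSet (F n)) (hGm : ∀ n, MeasurableSet (G n))
    (hEm : MeasurableSet Elim) (hEfin : volume Elim < ⊤)
    (M : ℝ≥0∞) (hM : M < ⊤) (hbd : ∀ n, volume (F n) + volume (G n) ≤ M)
    (hdisj : ∀ n, volume (F n ∩ G n) = 0)
    (hFconv : Tendsto (fun n => volume (symmDiff (F n) Elim)) atTop (𝓝 0))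
    (hGconv : ∀ K : Set (EuclideanSpace ℝ (Fin d)), IsCompact K →
      Tendsto (fun n => volume (G n ∩ K)) atTop (𝓝 0)) :
    Tendsto (fun n => riesz d l (F n ∪ G n) - riesz d l (F n) - riesz d l (G n))
        atTop (𝓝 0) ∧
      Tendsto (fun n => riesz d l (F n)) atTop (𝓝 (riesz d l Elim)) := by
  classical
  set M' : ℝ≥0∞ := M + volume Elim with hM'def
  have hM' : M' ≠ ⊤ := ENNReal.add_ne_top.2 ⟨hM.ne, hEfin.ne⟩
  have hvolFM : ∀ n, volume (F n) ≤ M := fun n => le_trans le_self_add (hbd n)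
  have hvolGM : ∀ n, volume (G n) ≤ M := fun n => le_trans le_add_self (hbd n)
  have hvolF : ∀ n, volume (F n) ≤ M' := fun n => le_trans (hvolFM n) le_self_add
  have hvolG : ∀ n, volume (G n) ≤ M' := fun n => le_trans (hvolGM n) le_self_add
  have hvolE : volume Elim ≤ M' := le_add_self
  set I₀ : ℝ≥0∞ := ∫⁻ z in ball (0 : EuclideanSpace ℝ (Fin d)) 1,
    ENNReal.ofReal (‖z‖ ^ (-l)) with hI₀def
  have hI₀ : I₀ ≠ ⊤ := (lintegral_ker_ball_lt_top hd hl hld).ne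
  set C : ℝ≥0∞ := I₀ + M' with hCdef
  have hC : C ≠ ⊤ := ENNReal.add_ne_top.2 ⟨hI₀, hM'⟩
  have hCpot : ∀ (x : EuclideanSpace ℝ (Fin d)) {B : Set (EuclideanSpace ℝ (Fin d))},
      MeasurableSet B → volume B ≤ M' → ∫⁻ y in B, ker l x y ≤ C := fun x _ hB hBv =>
    pot_bound hl M' x hB hBv
  have hfin : ∀ {B : Set (EuclideanSpace ℝ (Fin d))}, MeasurableSet B → volume B ≤ M' →
      ∀ x, (∫⁻ y in B, ker l x y) ≠ ⊤ := fun hB hBv x =>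
    ne_top_of_le_ne_top hC (hCpot x hB hBv)
  have hJfin : ∀ {A B : Set (EuclideanSpace ℝ (Fin d))}, volume A ≤ M' →
      MeasurableSet B → volume B ≤ M' → J l A B ≠ ⊤ := by
    intro A B hA hB hBv
    refine ne_top_of_le_ne_top (ENNReal.mul_ne_top hC hM') ?_
    exact le_trans (J_le_const fun x => hCpot x hB hBv) (mul_le_mul' le_rfl hA)
  -- Part 2 : continuity of the Riesz energy
  have hkey2 : ∀ n, |riesz d l (F n) - riesz d l Elim| ≤
      ((3 * C) * volume (symmDiff (F n) Elim)).toReal := by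
    intro n
    have hDn : volume (symmDiff (F n) Elim) ≠ ⊤ := by
      refine ne_top_of_le_ne_top (ENNReal.add_ne_top.2 ⟨(hvolF n).trans_lt hM'.lt_top |>.ne,
        hEfin.ne⟩) ?_
      refine le_trans (measure_mono symmDiff_subset_union) (measure_union_le _ _)
    set t : ℝ≥0∞ := (3 * C) * volume (symmDiff (F n) Elim) with htdef
    have ht : t ≠ ⊤ :=
      ENNReal.mul_ne_top (ENNReal.mul_ne_top (by simp) hC) hDn
    have hJF : J l (F n) (F n) ≠ ⊤ := hJfin (hvolF n) (hFm n) (hvolF n)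
    have hJE : J l Elim Elim ≠ ⊤ := hJfin hvolE hEm hvolE
    have hpot1 : ∀ (x : EuclideanSpace ℝ (Fin d)) (S : Set (EuclideanSpace ℝ (Fin d))),
        MeasurableSet S → S ⊆ F n ∪ Elim → ∫⁻ y in S, ker l x y ≤ C := by
      intro x S hS hsub
      refine hCpot x hS (le_trans (measure_mono hsub) ?_)
      exact le_trans (measure_union_le _ _) (add_le_add (hvolFM n) le_rfl)
    have hpot2 : ∀ (x : EuclideanSpace ℝ (Fin d)) (S : Set (EuclideanSpace ℝ (Fin d))),
        MeasurableSet S → S ⊆ Elim ∪ F n → ∫⁻ y in S, ker l x y ≤ C := by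
      intro x S hS hsub
      refine hpot1 x S hS (le_trans hsub ?_)
      rw [Set.union_comm]
    have hd1 : volume (F n \ Elim) ≤ volume (symmDiff (F n) Elim) := by
      refine measure_mono ?_
      rw [Set.symmDiff_def]
      exact subset_union_left
    have hd2 : volume (Elim \ F n) ≤ volume (symmDiff (F n) Elim) := by
      refine measure_mono ?_
      rw [Set.symmDiff_def]
      exact subset_union_right
    have h1 : J l (F n) (F n) ≤ J l Elim Elim + t := by
      refine le_trans (J_self_le (hFm n) hEm hpot1) (add_le_add le_rfl ?_)
      rw [htdef, mul_assoc]
      exact mul_le_mul' le_rfl (mul_le_mul' le_rfl hd1)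
    have h2 : J l Elim Elim ≤ J l (F n) (F n) + t := by
      refine le_trans (J_self_le hEm (hFm n) hpot2) (add_le_add le_rfl ?_)
      rw [htdef, mul_assoc]
      exact mul_le_mul' le_rfl (mul_le_mul' le_rfl hd2)
    have hJFr : (J l (F n) (F n)).toReal ≤ (J l Elim Elim).toReal + t.toReal := by
      have := ENNReal.toReal_mono (ENNReal.add_ne_top.2 ⟨hJE, ht⟩) h1
      rwa [ENNReal.toReal_add hJE ht] at this
    have hJEr : (J l Elim Elim).toReal ≤ (J l (F n) (F n)).toReal + t.toReal := by
      have := ENNReal.toReal_mono (ENNReal.add_ne_top.2 ⟨hJF, ht⟩) h2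
      rwa [ENNReal.toReal_add hJF ht] at this
    have htnn : (0:ℝ) ≤ t.toReal := ENNReal.toReal_nonneg
    rw [riesz_eq (hfin (hFm n) (hvolF n)), riesz_eq (hfin hEm hvolE), abs_sub_le_iff]
    constructor <;> linarith
  have htt : Tendsto (fun n => ((3 * C) * volume (symmDiff (F n) Elim)).toReal)
      atTop (𝓝 0) := by
    have h0 : Tendsto (fun n => (3 * C) * volume (symmDiff (F n) Elim)) atTop (𝓝 0) := by
      have := ENNReal.Tendsto.const_mul (a := 3 * C) hFconv
        (Or.inr (ENNReal.mul_ne_top (by simp) hC))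
      simpa using this
    have h1 := (ENNReal.tendsto_toReal (a := 0) (by simp)).comp h0
    rw [ENNReal.toReal_zero] at h1
    exact h1
  have part2 : Tendsto (fun n => riesz d l (F n)) atTop (𝓝 (riesz d l Elim)) := by
    rw [tendsto_iff_dist_tendsto_zero]
    refine squeeze_zero (fun n => dist_nonneg) (fun n => ?_) htt
    rw [Real.dist_eq]
    exact hkey2 n
  refine ⟨?_, part2⟩
  -- Part 1 : the cross term vanishes
  have hcross : ∀ n, riesz d l (F n ∪ G n) - riesz d l (F n) - riesz d l (G n) =
      (J l (F n) (G n)).toReal := fun n =>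
    riesz_union (hGm n) (hdisj n) (hfin (hFm n) (hvolF n)) (hfin (hGm n) (hvolG n))
      (hJfin (hvolF n) (hFm n) (hvolF n)) (hJfin (hvolG n) (hGm n) (hvolG n))
      (hJfin (hvolF n) (hGm n) (hvolG n))
  have hJ0 : Tendsto (fun n => J l (F n) (G n)) atTop (𝓝 0) := by
    rw [ENNReal.tendsto_nhds_zero]
    intro ε hε
    set C1 : ℝ≥0∞ := C + 1 with hC1def
    have hC1 : C1 ≠ ⊤ := ENNReal.add_ne_top.2 ⟨hC, by simp⟩
    set δ : ℝ≥0∞ := (ε / 8) / C1 with hδdef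
    have hε8 : (ε / 8) ≠ 0 := by
      refine ENNReal.div_ne_zero.2 ⟨hε.ne', by simp⟩
    have hδpos : 0 < δ := ENNReal.div_pos_iff.2 ⟨hε8, hC1⟩
    have hCδ : C * δ ≤ ε / 8 := by
      calc C * δ ≤ C1 * δ := mul_le_mul' le_self_add le_rfl
        _ ≤ ε / 8 := ENNReal.mul_div_le
    obtain ⟨R₁, hR₁⟩ : ∃ R : ℕ,
        volume (Elim \ closedBall (0 : EuclideanSpace ℝ (Fin d)) R) ≤ δ := by
      have h2 := tendsto_measure_iInter_atTop (μ := volume)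
        (s := fun n : ℕ => Elim \ closedBall (0 : EuclideanSpace ℝ (Fin d)) n)
        (fun n => (hEm.diff measurableSet_closedBall).nullMeasurableSet)
        (fun a b hab => diff_subset_diff_right
          (closedBall_subset_closedBall (by exact_mod_cast hab)))
        ⟨0, (lt_of_le_of_lt (measure_mono diff_subset) hEfin).ne⟩
      have h3 : ⋂ n : ℕ, (Elim \ closedBall (0 : EuclideanSpace ℝ (Fin d)) n) = ∅ := by
        ext x
        simp only [mem_iInter, mem_diff, mem_closedBall, dist_zero_right,
          mem_empty_iff_false, iff_false, not_forall]
        exact ⟨⌈‖x‖⌉₊, fun h => h.2 (Nat.le_ceil _)⟩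
      rw [h3, measure_empty] at h2
      exact ((ENNReal.tendsto_nhds_zero.1 h2) δ hδpos).exists
    obtain ⟨r₀, hr₀, hr₀1⟩ : ∃ r : ℕ,
        ENNReal.ofReal ((r:ℝ) ^ (-l)) * (M' * M') ≤ ε / 8 ∧ 1 ≤ (r:ℝ) := by
      have h2 : Tendsto (fun r : ℕ => (r:ℝ) ^ (-l)) atTop (𝓝 0) :=
        (tendsto_rpow_neg_atTop hl).comp tendsto_natCast_atTop_atTop
      have h3 : Tendsto (fun r : ℕ => ENNReal.ofReal ((r:ℝ) ^ (-l))) atTop (𝓝 0) := by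
        have := (ENNReal.continuous_ofReal.tendsto 0).comp h2
        simpa [Function.comp_def] using this
      have h4 : Tendsto (fun r : ℕ => ENNReal.ofReal ((r:ℝ) ^ (-l)) * (M' * M'))
          atTop (𝓝 0) := by
        have := ENNReal.Tendsto.mul_const h3 (Or.inr (ENNReal.mul_ne_top hM' hM'))
        simpa using this
      have h5 := (ENNReal.tendsto_nhds_zero.1 h4) (ε / 8)
        (by simpa [pos_iff_ne_zero] using hε8)
      obtain ⟨r, hr, hr1⟩ := (h5.and (eventually_ge_atTop 1)).exists
      exact ⟨r, hr, by exact_mod_cast hr1⟩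
    set K₁ := closedBall (0 : EuclideanSpace ℝ (Fin d)) (R₁ : ℝ) with hK₁def
    set K₂ := closedBall (0 : EuclideanSpace ℝ (Fin d)) ((R₁ : ℝ) + r₀) with hK₂def
    have hGK := (ENNReal.tendsto_nhds_zero.1
      (hGconv K₂ (isCompact_closedBall _ _))) δ hδpos
    have hFd := (ENNReal.tendsto_nhds_zero.1 hFconv) δ hδpos
    filter_upwards [hGK, hFd] with n hGn hFn
    have hGmK₂ : MeasurableSet (G n \ K₂) := (hGm n).diff measurableSet_closedBall
    have hFmK₁ : MeasurableSet (F n \ K₁) := (hFm n).diff measurableSet_closedBall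
    have e1 : J l (F n) (G n) = J l (F n) (G n ∩ K₂) + J l (F n) (G n \ K₂) := by
      have hdisjG : volume ((G n ∩ K₂) ∩ (G n \ K₂)) = 0 := by
        have h : (G n ∩ K₂) ∩ (G n \ K₂) = ∅ := by
          ext x
          simp only [mem_inter_iff, mem_diff, mem_empty_iff_false, iff_false, not_and]
          tauto
        rw [h, measure_empty]
      conv_lhs => rw [show G n = (G n ∩ K₂) ∪ (G n \ K₂) from (inter_union_diff _ _).symm]
      exact J_union_right _ hGmK₂ hdisjG
    have e2 : J l (F n) (G n \ K₂)
        = J l (F n ∩ K₁) (G n \ K₂) + J l (F n \ K₁) (G n \ K₂) := by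
      have hdisjF : volume ((F n ∩ K₁) ∩ (F n \ K₁)) = 0 := by
        have h : (F n ∩ K₁) ∩ (F n \ K₁) = ∅ := by
          ext x
          simp only [mem_inter_iff, mem_diff, mem_empty_iff_false, iff_false, not_and]
          tauto
        rw [h, measure_empty]
      conv_lhs => rw [show F n = (F n ∩ K₁) ∪ (F n \ K₁) from (inter_union_diff _ _).symm]
      exact J_union_left _ hFmK₁ hdisjF
    have hT1 : J l (F n) (G n ∩ K₂) ≤ ε / 8 := by
      rw [J_symm]
      refine le_trans (J_le_const fun x => hCpot x (hFm n) (hvolF n)) ?_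
      calc C * volume (G n ∩ K₂) ≤ C * δ := mul_le_mul' le_rfl hGn
        _ ≤ ε / 8 := hCδ
    have hT3 : J l (F n \ K₁) (G n \ K₂) ≤ ε / 8 + ε / 8 := by
      refine le_trans (J_le_const fun x => hCpot x hGmK₂
        (le_trans (measure_mono diff_subset) (hvolG n))) ?_
      have hFK : volume (F n \ K₁) ≤ δ + δ := by
        have hsub : F n \ K₁ ⊆ (Elim \ K₁) ∪ symmDiff (F n) Elim := by
          intro x hx
          by_cases hxE : x ∈ Elim
          · exact Or.inl ⟨hxE, hx.2⟩
          · exact Or.inr (by rw [Set.symmDiff_def]; exact Or.inl ⟨hx.1, hxE⟩)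
        exact le_trans (measure_mono hsub)
          (le_trans (measure_union_le _ _) (add_le_add hR₁ hFn))
      calc C * volume (F n \ K₁) ≤ C * (δ + δ) := mul_le_mul' le_rfl hFK
        _ = C * δ + C * δ := mul_add _ _ _
        _ ≤ ε / 8 + ε / 8 := add_le_add hCδ hCδ
    have hT2 : J l (F n ∩ K₁) (G n \ K₂) ≤ ε / 8 := by
      have hker : ∀ x ∈ F n ∩ K₁, ∀ y ∈ G n \ K₂,
          ker l x y ≤ ENNReal.ofReal ((r₀:ℝ) ^ (-l)) := by
        intro x hx y hy
        have hx1 : ‖x‖ ≤ (R₁:ℝ) := by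
          have := hx.2
          simpa [hK₁def, mem_closedBall, dist_zero_right] using this
        have hy1 : (R₁:ℝ) + r₀ < ‖y‖ := by
          have := hy.2
          simp only [hK₂def, mem_closedBall, dist_zero_right, not_le] at this
          exact this
        have hxy : (r₀:ℝ) ≤ ‖x - y‖ := by
          have h5 : ‖y‖ - ‖x‖ ≤ ‖y - x‖ := norm_sub_norm_le _ _
          rw [norm_sub_rev]
          linarith
        exact ENNReal.ofReal_le_ofReal (Real.rpow_le_rpow_of_nonpos
          (lt_of_lt_of_le zero_lt_one hr₀1) hxy (neg_nonpos.2 hl.le))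
      calc J l (F n ∩ K₁) (G n \ K₂)
          ≤ ∫⁻ _ in F n ∩ K₁, ENNReal.ofReal ((r₀:ℝ) ^ (-l)) * volume (G n \ K₂) := by
            refine setLIntegral_mono' ((hFm n).inter measurableSet_closedBall) ?_
            intro x hx
            calc ∫⁻ y in G n \ K₂, ker l x y
                ≤ ∫⁻ _ in G n \ K₂, ENNReal.ofReal ((r₀:ℝ) ^ (-l)) :=
                  setLIntegral_mono' hGmK₂ (fun y hy => hker x hx y hy)
              _ = ENNReal.ofReal ((r₀:ℝ) ^ (-l)) * volume (G n \ K₂) :=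
                  setLIntegral_const _ _
        _ = ENNReal.ofReal ((r₀:ℝ) ^ (-l)) * volume (G n \ K₂) * volume (F n ∩ K₁) :=
            setLIntegral_const _ _
        _ ≤ ENNReal.ofReal ((r₀:ℝ) ^ (-l)) * M' * M' := by
            refine mul_le_mul' (mul_le_mul' le_rfl ?_) ?_
            · exact le_trans (measure_mono diff_subset) (hvolG n)
            · exact le_trans (measure_mono inter_subset_left) (hvolF n)
        _ = ENNReal.ofReal ((r₀:ℝ) ^ (-l)) * (M' * M') := mul_assoc _ _ _
        _ ≤ ε / 8 := hr₀
    calc J l (F n) (G n) = J l (F n) (G n ∩ K₂)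
          + (J l (F n ∩ K₁) (G n \ K₂) + J l (F n \ K₁) (G n \ K₂)) := by rw [e1, e2]
      _ ≤ ε / 8 + (ε / 8 + (ε / 8 + ε / 8)) := add_le_add hT1 (add_le_add hT2 hT3)
      _ = 4 * (ε / 8) := by ring
      _ ≤ 8 * (ε / 8) := mul_le_mul' (by norm_num) le_rfl
      _ ≤ ε := ENNReal.mul_div_le
  have h1 := (ENNReal.tendsto_toReal (a := 0) (by simp)).comp hJ0
  rw [ENNReal.toReal_zero] at h1
  exact Tendsto.congr (fun n => (hcross n).symm) h1
end
end

section
/- Let I_λ(F, G) = (1/2) ∬_{F×G} |x−y|^{−λ} dx dy for 0 < λ < d. If E has finite measure, G_n have uniformly bounded measure, and G_n → ∅ locally, then I_λ(E, G_n) → 0. -/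
open MeasureTheory Filter Metric Set Topology
open scoped ENNReal NNReal

noncomputable section

/-- Riesz interaction energy between two sets. -/
def riesz2 (d : ℕ) (l : ℝ) (A B : Set (EuclideanSpace ℝ (Fin d))) : ℝ :=
  (1/2) * ∫ x in A, ∫ y in B, ‖x - y‖ ^ (-l)

section AuxRiesz

variable {d : ℕ} {l : ℝ}

local notation "V" => EuclideanSpace ℝ (Fin d)

/-- kernel measurability -/
lemma kmeas (l : ℝ) : Measurable (fun p : (EuclideanSpace ℝ (Fin d)) × (EuclideanSpace ℝ (Fin d)) =>
    ENNReal.ofReal (‖p.1 - p.2‖ ^ (-l))) := by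
  exact ((measurable_fst.sub measurable_snd).norm.pow measurable_const).ennreal_ofReal

/-- translation invariance -/
lemma transl (l : ℝ) (x : EuclideanSpace ℝ (Fin d)) (r : ℝ) :
    ∫⁻ y in ball x r, ENNReal.ofReal (‖x - y‖ ^ (-l)) =
      ∫⁻ z in ball (0 : EuclideanSpace ℝ (Fin d)) r, ENNReal.ofReal (‖z‖ ^ (-l)) := by
  have hmp : MeasurePreserving (fun z : EuclideanSpace ℝ (Fin d) => x + z) volume volume :=
    measurePreserving_add_left volume x
  have he : MeasurableEmbedding (fun z : EuclideanSpace ℝ (Fin d) => x + z) :=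
    (MeasurableEquiv.addLeft x).measurableEmbedding
  have := hmp.setLIntegral_comp_preimage_emb he
      (fun y => ENNReal.ofReal (‖x - y‖ ^ (-l))) (ball x r)
  rw [← this]
  have hpre : (fun z : EuclideanSpace ℝ (Fin d) => x + z) ⁻¹' ball x r = ball (0:EuclideanSpace ℝ (Fin d)) r := by
    ext z
    simp [mem_ball, dist_eq_norm]
  rw [hpre]
  refine setLIntegral_congr_fun measurableSet_ball (fun z _ => ?_)
  congr 1
  simp [norm_sub_rev]

/-- geometric decay of the ball lintegral of the kernel -/
lemma ball_decay (hd : 0 < d) (hl : 0 < l) (hld : l < d) :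
    ∃ C q : ℝ≥0∞, q < 1 ∧ C ≠ ∞ ∧ ∀ m : ℕ,
      (∫⁻ z in ball (0 : EuclideanSpace ℝ (Fin d)) ((2:ℝ) ^ (-(m:ℝ))),
        ENNReal.ofReal (‖z‖ ^ (-l))) ≤ C * q ^ m := by
  haveI : Nonempty (Fin d) := Fin.pos_iff_nonempty.mp hd
  haveI : Nontrivial (EuclideanSpace ℝ (Fin d)) := inferInstance
  set ρ : ℕ → ℝ := fun i => (2:ℝ) ^ (-(i:ℝ)) with hρ
  have hρpos : ∀ i, 0 < ρ i := fun i => Real.rpow_pos_of_pos two_pos _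
  have hρanti : ∀ ⦃i j : ℕ⦄, i ≤ j → ρ j ≤ ρ i := fun i j h =>
    Real.rpow_le_rpow_of_exponent_le one_le_two (by exact_mod_cast neg_le_neg (by exact_mod_cast h))
  set V₁ : ℝ≥0∞ := volume (ball (0 : EuclideanSpace ℝ (Fin d)) 1) with hV₁
  have hV₁fin : V₁ ≠ ∞ := measure_ball_lt_top.ne
  set q : ℝ≥0∞ := ENNReal.ofReal ((2:ℝ) ^ (l - d)) with hqdef
  have hq1 : q < 1 := by
    rw [hqdef]
    refine ENNReal.ofReal_lt_one.2 ?_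
    exact Real.rpow_lt_one_of_one_lt_of_neg one_lt_two (by linarith)
  set C : ℝ≥0∞ := ENNReal.ofReal ((2:ℝ) ^ l) * V₁ * (1 - q)⁻¹ with hCdef
  have hCfin : C ≠ ∞ := by
    refine ENNReal.mul_ne_top (ENNReal.mul_ne_top ENNReal.ofReal_ne_top hV₁fin) ?_
    exact ENNReal.inv_ne_top.2 (tsub_pos_of_lt hq1).ne'
  refine ⟨C, q, hq1, hCfin, fun m => ?_⟩
  -- annuli
  set A : ℕ → Set (EuclideanSpace ℝ (Fin d)) := fun i =>
    ball (0 : EuclideanSpace ℝ (Fin d)) (ρ i) \ ball 0 (ρ (i+1)) with hA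
  -- each annulus bound
  have hann : ∀ i : ℕ, (∫⁻ z in A i, ENNReal.ofReal (‖z‖ ^ (-l))) ≤
      ENNReal.ofReal ((2:ℝ) ^ l) * V₁ * q ^ i := by
    intro i
    have hbound : ∀ z ∈ A i, ENNReal.ofReal (‖z‖ ^ (-l)) ≤
        ENNReal.ofReal ((ρ (i+1)) ^ (-l)) := by
      intro z hz
      refine ENNReal.ofReal_le_ofReal ?_
      have hz1 : ρ (i+1) ≤ ‖z‖ := by
        have := hz.2
        simpa [mem_ball, dist_eq_norm] using this
      exact Real.rpow_le_rpow_of_nonpos (hρpos _) hz1 (by linarith)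
    have h1 : (∫⁻ z in A i, ENNReal.ofReal (‖z‖ ^ (-l))) ≤
        ENNReal.ofReal ((ρ (i+1)) ^ (-l)) * volume (A i) := by
      calc (∫⁻ z in A i, ENNReal.ofReal (‖z‖ ^ (-l)))
          ≤ ∫⁻ _ in A i, ENNReal.ofReal ((ρ (i+1)) ^ (-l)) :=
            setLIntegral_mono' (measurableSet_ball.diff measurableSet_ball) hbound
        _ = ENNReal.ofReal ((ρ (i+1)) ^ (-l)) * volume (A i) := by
            rw [setLIntegral_const]
    have hvol : volume (A i) ≤ ENNReal.ofReal ((ρ i) ^ (d:ℝ)) * V₁ := by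
      refine le_trans (measure_mono diff_subset) ?_
      rw [Measure.addHaar_ball _ _ (hρpos i).le, hV₁]
      rw [finrank_euclideanSpace_fin]
      rw [← Real.rpow_natCast (ρ i) d]
    calc (∫⁻ z in A i, ENNReal.ofReal (‖z‖ ^ (-l)))
        ≤ ENNReal.ofReal ((ρ (i+1)) ^ (-l)) * (ENNReal.ofReal ((ρ i) ^ (d:ℝ)) * V₁) :=
          h1.trans (mul_le_mul_right hvol _)
      _ = ENNReal.ofReal ((ρ (i+1)) ^ (-l) * (ρ i) ^ (d:ℝ)) * V₁ := by
          rw [ENNReal.ofReal_mul (Real.rpow_nonneg (hρpos _).le _), mul_assoc]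
      _ = ENNReal.ofReal ((2:ℝ) ^ l * ((2:ℝ) ^ (l - d)) ^ i) * V₁ := by
          congr 2
          rw [hρ]
          rw [← Real.rpow_natCast ((2:ℝ) ^ (l - (d:ℝ))) i]
          rw [← Real.rpow_mul (by norm_num : (0:ℝ) ≤ 2),
              ← Real.rpow_mul (by norm_num : (0:ℝ) ≤ 2),
              ← Real.rpow_mul (by norm_num : (0:ℝ) ≤ 2),
              ← Real.rpow_add two_pos, ← Real.rpow_add two_pos]
          congr 1
          push_cast
          ring
      _ = ENNReal.ofReal ((2:ℝ) ^ l) * V₁ * q ^ i := by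
          rw [ENNReal.ofReal_mul (Real.rpow_nonneg (by norm_num) _),
            ENNReal.ofReal_pow (Real.rpow_nonneg (by norm_num) _), hqdef]
          ring
  -- covering
  have hcov : ball (0 : EuclideanSpace ℝ (Fin d)) (ρ m) \ {0} ⊆ ⋃ j : ℕ, A (m + j) := by
    intro z hz
    obtain ⟨hzb, hz0⟩ := hz
    have hzn : (0:ℝ) < ‖z‖ := by
      simpa [norm_pos_iff] using hz0
    have hex : ∃ j : ℕ, ρ j ≤ ‖z‖ := by
      obtain ⟨j, hj⟩ := exists_pow_lt_of_lt_one hzn (by norm_num : (1:ℝ)/2 < 1)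
      refine ⟨j, le_of_lt ?_⟩
      calc ρ j = ((1:ℝ)/2) ^ j := by
            show (2:ℝ) ^ (-(j:ℝ)) = ((1:ℝ)/2) ^ j
            rw [one_div, inv_pow, ← Real.rpow_natCast (2:ℝ) j,
              ← Real.rpow_neg (by norm_num : (0:ℝ) ≤ 2)]
        _ < ‖z‖ := hj
    classical
    set n₀ := Nat.find hex with hn₀
    have hn₀le : ρ n₀ ≤ ‖z‖ := Nat.find_spec hex
    have hmlt : m < n₀ := by
      by_contra h
      push_neg at h
      have : ρ m ≤ ‖z‖ := le_trans (hρanti h) hn₀le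
      have : ‖z‖ < ρ m := by simpa [mem_ball, dist_eq_norm] using hzb
      linarith [le_trans (hρanti h) hn₀le]
    have hi : ∃ i, n₀ = i + 1 := ⟨n₀ - 1, by omega⟩
    obtain ⟨i, hi⟩ := hi
    have him : m ≤ i := by omega
    have hilt : ‖z‖ < ρ i := by
      have := Nat.find_min hex (m := i) (by omega)
      push_neg at this
      exact this
    refine mem_iUnion.2 ⟨i - m, ?_⟩
    have : m + (i - m) = i := by omega
    rw [this]
    constructor
    · simpa [mem_ball, dist_eq_norm] using hilt
    · simp only [mem_ball, dist_eq_norm, sub_zero, not_lt]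
      rw [← hi]
      simpa using hn₀le
  -- put together
  have hzero : (∫⁻ z in ball (0 : EuclideanSpace ℝ (Fin d)) (ρ m),
      ENNReal.ofReal (‖z‖ ^ (-l))) =
      ∫⁻ z in ball (0 : EuclideanSpace ℝ (Fin d)) (ρ m) \ {0},
      ENNReal.ofReal (‖z‖ ^ (-l)) := by
    refine (setLIntegral_congr ?_).symm
    exact diff_ae_eq_self.2 (measure_mono_null Set.inter_subset_right (measure_singleton 0))
  calc (∫⁻ z in ball (0 : EuclideanSpace ℝ (Fin d)) ((2:ℝ) ^ (-(m:ℝ))),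
        ENNReal.ofReal (‖z‖ ^ (-l)))
      = ∫⁻ z in ball (0 : EuclideanSpace ℝ (Fin d)) (ρ m) \ {0},
        ENNReal.ofReal (‖z‖ ^ (-l)) := hzero
    _ ≤ ∫⁻ z in ⋃ j : ℕ, A (m + j), ENNReal.ofReal (‖z‖ ^ (-l)) :=
        lintegral_mono_set hcov
    _ ≤ ∑' j : ℕ, ∫⁻ z in A (m + j), ENNReal.ofReal (‖z‖ ^ (-l)) :=
        lintegral_iUnion_le _ _
    _ ≤ ∑' j : ℕ, ENNReal.ofReal ((2:ℝ) ^ l) * V₁ * q ^ (m + j) :=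
        ENNReal.tsum_le_tsum fun j => hann (m + j)
    _ = ENNReal.ofReal ((2:ℝ) ^ l) * V₁ * q ^ m * ∑' j : ℕ, q ^ j := by
        rw [← ENNReal.tsum_mul_left]
        congr 1
        ext j
        rw [pow_add]
        ring
    _ = C * q ^ m := by
        rw [ENNReal.tsum_geometric, hCdef]
        ring

/-- two-piece bound -/
lemma bound2 (l : ℝ) (hl : 0 < l) (A : Set (EuclideanSpace ℝ (Fin d)))
    (hA : MeasurableSet A) (x : EuclideanSpace ℝ (Fin d)) {r : ℝ} (hr : 0 < r) :
    (∫⁻ y in A, ENNReal.ofReal (‖x - y‖ ^ (-l))) ≤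
      (∫⁻ z in ball (0 : EuclideanSpace ℝ (Fin d)) r, ENNReal.ofReal (‖z‖ ^ (-l)))
        + ENNReal.ofReal (r ^ (-l)) * volume A := by
  have hsub : A ⊆ ball x r ∪ (A \ ball x r) := by
    intro y hy
    by_cases h : y ∈ ball x r
    · exact Or.inl h
    · exact Or.inr ⟨hy, h⟩
  calc (∫⁻ y in A, ENNReal.ofReal (‖x - y‖ ^ (-l)))
      ≤ ∫⁻ y in ball x r ∪ (A \ ball x r), ENNReal.ofReal (‖x - y‖ ^ (-l)) :=
        lintegral_mono_set hsub
    _ ≤ (∫⁻ y in ball x r, ENNReal.ofReal (‖x - y‖ ^ (-l)))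
        + ∫⁻ y in A \ ball x r, ENNReal.ofReal (‖x - y‖ ^ (-l)) := lintegral_union_le _ _ _
    _ ≤ (∫⁻ z in ball (0 : EuclideanSpace ℝ (Fin d)) r, ENNReal.ofReal (‖z‖ ^ (-l)))
        + ENNReal.ofReal (r ^ (-l)) * volume A := by
        refine add_le_add (le_of_eq (transl l x r)) ?_
        calc (∫⁻ y in A \ ball x r, ENNReal.ofReal (‖x - y‖ ^ (-l)))
            ≤ ∫⁻ _ in A \ ball x r, ENNReal.ofReal (r ^ (-l)) := by
              refine setLIntegral_mono' (hA.diff measurableSet_ball) fun y hy => ?_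
              refine ENNReal.ofReal_le_ofReal ?_
              have hry : r ≤ ‖x - y‖ := by
                have := hy.2
                simp only [mem_ball, dist_eq_norm, not_lt] at this
                rwa [norm_sub_rev]
              exact Real.rpow_le_rpow_of_nonpos hr hry (by linarith)
          _ = ENNReal.ofReal (r ^ (-l)) * volume (A \ ball x r) := setLIntegral_const _ _
          _ ≤ ENNReal.ofReal (r ^ (-l)) * volume A :=
              mul_le_mul_right (measure_mono diff_subset) _

/-- three-piece bound for x in a bounded region -/
lemma bound3 (l : ℝ) (hl : 0 < l) (A : Set (EuclideanSpace ℝ (Fin d)))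
    (hA : MeasurableSet A) (x : EuclideanSpace ℝ (Fin d)) {r S t : ℝ} (hr : 0 < r)
    (ht : 0 < t) (hx : ‖x‖ ≤ S) :
    (∫⁻ y in A, ENNReal.ofReal (‖x - y‖ ^ (-l))) ≤
      (∫⁻ z in ball (0 : EuclideanSpace ℝ (Fin d)) r, ENNReal.ofReal (‖z‖ ^ (-l)))
        + ENNReal.ofReal (r ^ (-l)) * volume (A ∩ closedBall (0 : EuclideanSpace ℝ (Fin d)) (S + t))
        + ENNReal.ofReal (t ^ (-l)) * volume A := by
  set B := closedBall (0 : EuclideanSpace ℝ (Fin d)) (S + t) with hB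
  have hsub : A ⊆ (ball x r ∪ ((A ∩ B) \ ball x r)) ∪ (A \ B) := by
    intro y hy
    by_cases h1 : y ∈ ball x r
    · exact Or.inl (Or.inl h1)
    · by_cases h2 : y ∈ B
      · exact Or.inl (Or.inr ⟨⟨hy, h2⟩, h1⟩)
      · exact Or.inr ⟨hy, h2⟩
  calc (∫⁻ y in A, ENNReal.ofReal (‖x - y‖ ^ (-l)))
      ≤ ∫⁻ y in (ball x r ∪ ((A ∩ B) \ ball x r)) ∪ (A \ B),
          ENNReal.ofReal (‖x - y‖ ^ (-l)) := lintegral_mono_set hsub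
    _ ≤ (∫⁻ y in ball x r ∪ ((A ∩ B) \ ball x r), ENNReal.ofReal (‖x - y‖ ^ (-l)))
        + ∫⁻ y in A \ B, ENNReal.ofReal (‖x - y‖ ^ (-l)) := lintegral_union_le _ _ _
    _ ≤ ((∫⁻ y in ball x r, ENNReal.ofReal (‖x - y‖ ^ (-l)))
        + ∫⁻ y in (A ∩ B) \ ball x r, ENNReal.ofReal (‖x - y‖ ^ (-l)))
        + ∫⁻ y in A \ B, ENNReal.ofReal (‖x - y‖ ^ (-l)) :=
        add_le_add (lintegral_union_le _ _ _) le_rfl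
    _ ≤ (∫⁻ z in ball (0 : EuclideanSpace ℝ (Fin d)) r, ENNReal.ofReal (‖z‖ ^ (-l)))
        + ENNReal.ofReal (r ^ (-l)) * volume (A ∩ B)
        + ENNReal.ofReal (t ^ (-l)) * volume A := by
        refine add_le_add (add_le_add (le_of_eq (transl l x r)) ?_) ?_
        · calc (∫⁻ y in (A ∩ B) \ ball x r, ENNReal.ofReal (‖x - y‖ ^ (-l)))
              ≤ ∫⁻ _ in (A ∩ B) \ ball x r, ENNReal.ofReal (r ^ (-l)) := by
                refine setLIntegral_mono'
                  ((hA.inter measurableSet_closedBall).diff measurableSet_ball) fun y hy => ?_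
                refine ENNReal.ofReal_le_ofReal ?_
                have hry : r ≤ ‖x - y‖ := by
                  have := hy.2
                  simp only [mem_ball, dist_eq_norm, not_lt] at this
                  rwa [norm_sub_rev]
                exact Real.rpow_le_rpow_of_nonpos hr hry (by linarith)
            _ = ENNReal.ofReal (r ^ (-l)) * volume ((A ∩ B) \ ball x r) := setLIntegral_const _ _
            _ ≤ ENNReal.ofReal (r ^ (-l)) * volume (A ∩ B) :=
                mul_le_mul_right (measure_mono diff_subset) _
        · calc (∫⁻ y in A \ B, ENNReal.ofReal (‖x - y‖ ^ (-l)))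
              ≤ ∫⁻ _ in A \ B, ENNReal.ofReal (t ^ (-l)) := by
                refine setLIntegral_mono' (hA.diff measurableSet_closedBall) fun y hy => ?_
                refine ENNReal.ofReal_le_ofReal ?_
                have hyB : S + t < ‖y‖ := by
                  have := hy.2
                  simp only [hB, mem_closedBall, dist_eq_norm, sub_zero, not_le] at this
                  exact this
                have hty : t ≤ ‖x - y‖ := by
                  have h1 : ‖y‖ - ‖x‖ ≤ ‖x - y‖ := by
                    have := norm_sub_norm_le y x
                    rwa [norm_sub_rev] at this
                  linarith
                exact Real.rpow_le_rpow_of_nonpos ht hty (by linarith)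
            _ = ENNReal.ofReal (t ^ (-l)) * volume (A \ B) := setLIntegral_const _ _
            _ ≤ ENNReal.ofReal (t ^ (-l)) * volume A :=
                mul_le_mul_right (measure_mono diff_subset) _

/-- tail of a finite-measure set vanishes -/
lemma tailE (E : Set (EuclideanSpace ℝ (Fin d))) (hEm : MeasurableSet E)
    (hEfin : volume E < ⊤) :
    Tendsto (fun S : ℕ => volume (E \ closedBall (0 : EuclideanSpace ℝ (Fin d)) S))
      atTop (𝓝 0) := by
  have h := tendsto_measure_iInter_atTop (μ := volume)
    (s := fun S : ℕ => E \ closedBall (0 : EuclideanSpace ℝ (Fin d)) S)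
    (fun S => (hEm.diff measurableSet_closedBall).nullMeasurableSet)
    (fun i j hij => diff_subset_diff_right (closedBall_subset_closedBall (by exact_mod_cast hij)))
    ⟨0, (lt_of_le_of_lt (measure_mono diff_subset) hEfin).ne⟩
  have hempty : (⋂ S : ℕ, E \ closedBall (0 : EuclideanSpace ℝ (Fin d)) S) = ∅ := by
    ext x
    simp only [mem_iInter, mem_diff, mem_closedBall, dist_eq_norm, sub_zero, mem_empty_iff_false,
      iff_false, not_forall]
    obtain ⟨S, hS⟩ := exists_nat_ge ‖x‖
    exact ⟨S, fun h => h.2 hS⟩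
  rw [hempty] at h
  simpa [Function.comp_def] using h

lemma hmul {x D y z : ℝ≥0∞} (hy : y ≤ x / D) (hz : z ≤ D) : y * z ≤ x :=
  calc y * z ≤ x / D * D := mul_le_mul' hy hz
    _ = D * (x / D) := mul_comm _ _
    _ ≤ x := ENNReal.mul_div_le


end AuxRiesz

/-- the interaction between a fixed set and a locally vanishing sequence vanishes. -/
theorem riesz_interaction_tendsto_zero (d : ℕ) (hd : 0 < d) (l : ℝ) (hl : 0 < l) (hld : l < d)
    (E : Set (EuclideanSpace ℝ (Fin d))) (hEm : MeasurableSet E) (hEfin : volume E < ⊤)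
    (G : ℕ → Set (EuclideanSpace ℝ (Fin d))) (hGm : ∀ n, MeasurableSet (G n))
    (M : ℝ≥0∞) (hM : M < ⊤) (hbd : ∀ n, volume (G n) ≤ M)
    (hGconv : ∀ K : Set (EuclideanSpace ℝ (Fin d)), IsCompact K →
      Tendsto (fun n => volume (G n ∩ K)) atTop (𝓝 0)) :
    Tendsto (fun n => riesz2 d l E (G n)) atTop (𝓝 0) := by
  
  classical
  obtain ⟨C, q, hq1, hCfin, hB⟩ := ball_decay hd hl hld
  set cc : ℝ → ℝ≥0∞ := fun r =>
    ∫⁻ z in ball (0 : EuclideanSpace ℝ (Fin d)) r, ENNReal.ofReal (‖z‖ ^ (-l)) with hcc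
  have hccB : ∀ m : ℕ, cc ((2:ℝ) ^ (-(m:ℝ))) ≤ C * q ^ m := hB
  have hccC : ∀ m : ℕ, cc ((2:ℝ) ^ (-(m:ℝ))) ≤ C := fun m =>
    (hB m).trans (by
      calc C * q ^ m ≤ C * 1 := mul_le_mul_right (pow_le_one' hq1.le m) C
        _ = C := mul_one C)
  set g : ℕ → EuclideanSpace ℝ (Fin d) → ℝ≥0∞ := fun n x =>
    ∫⁻ y in G n, ENNReal.ofReal (‖x - y‖ ^ (-l)) with hg
  have hgmeas : ∀ n, Measurable (g n) := fun n =>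
    Measurable.lintegral_prod_right' (kmeas l)
  -- uniform finiteness of g
  have hgbd : ∀ n x, g n x ≤ C + ENNReal.ofReal ((1:ℝ) ^ (-l)) * M := by
    intro n x
    have h2 := bound2 l hl (G n) (hGm n) x (r := 1) one_pos
    have h1 : cc 1 ≤ C := by
      have := hccC 0
      simpa using this
    refine h2.trans (add_le_add ?_ (mul_le_mul_right (hbd n) _))
    exact h1
  have hgtop : ∀ n x, g n x ≠ ∞ := by
    intro n x
    refine (lt_of_le_of_lt (hgbd n x) ?_).ne
    exact ENNReal.add_lt_top.2 ⟨hCfin.lt_top, ENNReal.mul_lt_top ENNReal.ofReal_lt_top hM⟩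
  set J : ℕ → ℝ≥0∞ := fun n => ∫⁻ x in E, g n x with hJ
  -- conversion from Bochner to lintegral
  have hconv : ∀ n, riesz2 d l E (G n) = (1/2) * (J n).toReal := by
    intro n
    have hinner : ∀ x : EuclideanSpace ℝ (Fin d),
        (∫ y in G n, ‖x - y‖ ^ (-l)) = (g n x).toReal := by
      intro x
      rw [integral_eq_lintegral_of_nonneg_ae
        (Filter.Eventually.of_forall fun y => Real.rpow_nonneg (norm_nonneg _) _)
        ((measurable_const.sub measurable_id).norm.pow measurable_const).aestronglyMeasurable]
    have houter : (∫ x in E, (g n x).toReal) = (J n).toReal := by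
      rw [integral_eq_lintegral_of_nonneg_ae
        (Filter.Eventually.of_forall fun x => ENNReal.toReal_nonneg)
        ((hgmeas n).ennreal_toReal).aestronglyMeasurable]
      congr 1
      exact lintegral_congr fun x => ENNReal.ofReal_toReal (hgtop n x)
    rw [riesz2]
    congr 1
    rw [← houter]
    exact setIntegral_congr_fun hEm fun x _ => hinner x
  -- J tends to zero
  have hJ0 : Tendsto J atTop (𝓝 0) := by
    rw [ENNReal.tendsto_atTop_zero]
    intro ε hε
    have hε8 : (0:ℝ≥0∞) < ε / 8 := ENNReal.div_pos hε.ne' (by norm_num)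
    -- choice of r
    set D₁ : ℝ≥0∞ := volume E + M + 1 with hD₁
    have hD₁top : D₁ ≠ ∞ := by
      simp [hD₁, ENNReal.add_ne_top, hEfin.ne, hM.ne]
    have hδ₁ : (0:ℝ≥0∞) < ε / 8 / D₁ := ENNReal.div_pos hε8.ne' hD₁top
    have hCq : Tendsto (fun m : ℕ => C * q ^ m) atTop (𝓝 0) := by
      have h0 := ENNReal.Tendsto.const_mul
        (ENNReal.tendsto_pow_atTop_nhds_zero_of_lt_one hq1) (Or.inr hCfin)
      simpa using h0
    obtain ⟨m, hm⟩ := ENNReal.tendsto_atTop_zero.mp hCq _ hδ₁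
    set r : ℝ := (2:ℝ) ^ (-(m:ℝ)) with hrdef
    have hr : 0 < r := Real.rpow_pos_of_pos two_pos _
    have hcr₁ : cc r ≤ ε / 8 / D₁ := (hccB m).trans (hm m le_rfl)
    have hcrC : cc r ≤ C := hccC m
    set Kr : ℝ≥0∞ := ENNReal.ofReal (r ^ (-l)) with hKr
    -- choice of S
    set D₂ : ℝ≥0∞ := C + Kr * M + 1 with hD₂
    have hD₂top : D₂ ≠ ∞ := by
      simp [hD₂, ENNReal.add_ne_top, hCfin, ENNReal.mul_ne_top ENNReal.ofReal_ne_top hM.ne]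
      exact ENNReal.mul_ne_top ENNReal.ofReal_ne_top hM.ne
    have hδ₂ : (0:ℝ≥0∞) < ε / 8 / D₂ := ENNReal.div_pos hε8.ne' hD₂top
    obtain ⟨S, hS⟩ := ENNReal.tendsto_atTop_zero.mp (tailE E hEm hEfin) _ hδ₂
    have hStail : volume (E \ closedBall (0 : EuclideanSpace ℝ (Fin d)) S) ≤ ε / 8 / D₂ :=
      hS S le_rfl
    -- choice of t
    set D₃ : ℝ≥0∞ := M * volume E + 1 with hD₃
    have hD₃top : D₃ ≠ ∞ := by
      simp [hD₃, ENNReal.add_ne_top, ENNReal.mul_ne_top hM.ne hEfin.ne]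
    have hδ₃ : (0:ℝ≥0∞) < ε / 8 / D₃ := ENNReal.div_pos hε8.ne' hD₃top
    have htt : Tendsto (fun t : ℝ => ENNReal.ofReal (t ^ (-l))) atTop (𝓝 0) := by
      have := ENNReal.tendsto_ofReal (tendsto_rpow_neg_atTop hl)
      simpa using this
    obtain ⟨t, ht1, htδ⟩ : ∃ t : ℝ, 1 ≤ t ∧ ENNReal.ofReal (t ^ (-l)) ≤ ε / 8 / D₃ := by
      have h1 := htt.eventually_le_const hδ₃
      have h2 := eventually_ge_atTop (1:ℝ)
      obtain ⟨t, ht1, ht2⟩ := (h2.and h1).exists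
      exact ⟨t, ht1, ht2⟩
    have ht0 : (0:ℝ) < t := lt_of_lt_of_le one_pos ht1
    -- choice of N
    set K : Set (EuclideanSpace ℝ (Fin d)) := closedBall 0 ((S:ℝ) + t) with hK
    set D₄ : ℝ≥0∞ := Kr * volume E + 1 with hD₄
    have hD₄top : D₄ ≠ ∞ := by
      simp [hD₄, ENNReal.add_ne_top, ENNReal.mul_ne_top ENNReal.ofReal_ne_top hEfin.ne]
      exact ENNReal.mul_ne_top ENNReal.ofReal_ne_top hEfin.ne
    have hδ₄ : (0:ℝ≥0∞) < ε / 8 / D₄ := ENNReal.div_pos hε8.ne' hD₄top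
    obtain ⟨N, hN⟩ := ENNReal.tendsto_atTop_zero.mp
      (hGconv K (isCompact_closedBall _ _)) _ hδ₄
    refine ⟨N, fun n hn => ?_⟩
    have hGK : volume (G n ∩ K) ≤ ε / 8 / D₄ := hN n hn
    -- the main estimate
    set Bs : Set (EuclideanSpace ℝ (Fin d)) := closedBall 0 (S:ℝ) with hBs
    have hnear : ∀ x ∈ E ∩ Bs, g n x ≤
        cc r + Kr * volume (G n ∩ K) + ENNReal.ofReal (t ^ (-l)) * M := by
      intro x hx
      have hxS : ‖x‖ ≤ (S:ℝ) := by
        have := hx.2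
        simpa [hBs, mem_closedBall, dist_eq_norm] using this
      have h3 := bound3 l hl (G n) (hGm n) x hr ht0 hxS
      refine h3.trans ?_
      exact add_le_add le_rfl (mul_le_mul_right (hbd n) _)
    have hfar : ∀ x, g n x ≤ cc r + Kr * M := by
      intro x
      refine (bound2 l hl (G n) (hGm n) x hr).trans ?_
      exact add_le_add le_rfl (mul_le_mul_right (hbd n) _)
    have hsplit : J n ≤ (∫⁻ x in E ∩ Bs, g n x) + ∫⁻ x in E \ Bs, g n x := by
      have hsub : E ⊆ (E ∩ Bs) ∪ (E \ Bs) := by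
        intro x hx
        by_cases h : x ∈ Bs
        · exact Or.inl ⟨hx, h⟩
        · exact Or.inr ⟨hx, h⟩
      exact (lintegral_mono_set hsub).trans (lintegral_union_le _ _ _)
    have hterm1 : (∫⁻ x in E ∩ Bs, g n x) ≤
        (cc r + Kr * volume (G n ∩ K) + ENNReal.ofReal (t ^ (-l)) * M) * volume (E ∩ Bs) := by
      calc (∫⁻ x in E ∩ Bs, g n x)
          ≤ ∫⁻ _ in E ∩ Bs, (cc r + Kr * volume (G n ∩ K) + ENNReal.ofReal (t ^ (-l)) * M) :=
            setLIntegral_mono' (hEm.inter measurableSet_closedBall) hnear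
        _ = _ := setLIntegral_const _ _
    have hterm2 : (∫⁻ x in E \ Bs, g n x) ≤ (cc r + Kr * M) * volume (E \ Bs) := by
      calc (∫⁻ x in E \ Bs, g n x)
          ≤ ∫⁻ _ in E \ Bs, (cc r + Kr * M) :=
            setLIntegral_mono' (hEm.diff measurableSet_closedBall) fun x _ => hfar x
        _ = _ := setLIntegral_const _ _
    have hvolEBs : volume (E ∩ Bs) ≤ volume E := measure_mono inter_subset_left
    -- bound the four pieces
    have hp1 : cc r * volume (E ∩ Bs) ≤ ε / 8 := by
      refine hmul hcr₁ (hvolEBs.trans ?_)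
      rw [hD₁]
      exact le_add_right (le_add_right le_rfl)
    have hp2 : Kr * volume (G n ∩ K) * volume (E ∩ Bs) ≤ ε / 8 := by
      have : Kr * volume (G n ∩ K) * volume (E ∩ Bs) =
          volume (G n ∩ K) * (Kr * volume (E ∩ Bs)) := by ring
      rw [this]
      refine hmul hGK ?_
      rw [hD₄]
      exact le_add_right (mul_le_mul_right hvolEBs _)
    have hp3 : ENNReal.ofReal (t ^ (-l)) * M * volume (E ∩ Bs) ≤ ε / 8 := by
      have : ENNReal.ofReal (t ^ (-l)) * M * volume (E ∩ Bs) =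
          ENNReal.ofReal (t ^ (-l)) * (M * volume (E ∩ Bs)) := by ring
      rw [this]
      refine hmul htδ ?_
      rw [hD₃]
      exact le_add_right (mul_le_mul_right hvolEBs _)
    have hp4 : (cc r + Kr * M) * volume (E \ Bs) ≤ ε / 8 := by
      rw [mul_comm]
      refine hmul hStail ?_
      rw [hD₂]
      exact le_add_right (add_le_add hcrC le_rfl)
    calc J n ≤ (∫⁻ x in E ∩ Bs, g n x) + ∫⁻ x in E \ Bs, g n x := hsplit
      _ ≤ (cc r + Kr * volume (G n ∩ K) + ENNReal.ofReal (t ^ (-l)) * M) * volume (E ∩ Bs)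
          + (cc r + Kr * M) * volume (E \ Bs) := add_le_add hterm1 hterm2
      _ = cc r * volume (E ∩ Bs) + Kr * volume (G n ∩ K) * volume (E ∩ Bs)
          + ENNReal.ofReal (t ^ (-l)) * M * volume (E ∩ Bs)
          + (cc r + Kr * M) * volume (E \ Bs) := by ring
      _ ≤ ε / 8 + ε / 8 + ε / 8 + ε / 8 :=
          add_le_add (add_le_add (add_le_add hp1 hp2) hp3) hp4
      _ = 4 * (ε / 8) := by ring
      _ ≤ 8 * (ε / 8) := mul_le_mul_left (by norm_num) _
      _ ≤ ε := ENNReal.mul_div_le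
  -- conclude
  have htoReal : Tendsto (fun n => (J n).toReal) atTop (𝓝 0) := by
    have := (ENNReal.tendsto_toReal (a := 0) (by simp)).comp hJ0
    simpa [Function.comp_def] using this
  have := htoReal.const_mul (1/2 : ℝ)
  simp only [mul_zero] at this
  refine Tendsto.congr (fun n => ?_) this
  rw [hconv n]
end
end

section
/- Suppose A_0 > 0 is a local minimum of A ↦ E(A)/A and E(A_0) is attained by a set Ω_0 with |Ω_0| = A_0, where E(A) = inf{Per(Ω) + D(Ω) : |Ω| = A}. Then the virial relation Per(Ω_0) = 2 D(Ω_0) holds. -/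
open MeasureTheory Filter Metric Set Topology

noncomputable section

section VirialAux

open scoped Pointwise

lemma setIntegral_smul_set {c : ℝ} (hc : 0 < c) (s : Set E3) (f : E3 → ℝ) :
    ∫ x in c • s, f x = c ^ 3 * ∫ x in s, f (c • x) := by
  have h := MeasureTheory.Measure.setIntegral_comp_smul_of_pos (volume : Measure E3) f s hc
  rw [finrank_euclideanSpace_fin] at h
  rw [h, smul_eq_mul, mul_inv_cancel_left₀ (by positivity)]

lemma volume_smul_set {c : ℝ} (hc : 0 < c) (s : Set E3) {A : ℝ}
    (hs : volume s = ENNReal.ofReal A) :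
    volume (c • s) = ENNReal.ofReal (c ^ 3 * A) := by
  rw [MeasureTheory.Measure.addHaar_smul_of_nonneg volume hc.le s,
    finrank_euclideanSpace_fin, hs, ← ENNReal.ofReal_mul (by positivity)]

lemma coulomb_smul {c : ℝ} (hc : 0 < c) (Ω : Set E3) :
    coulomb (c • Ω) = c ^ 5 * coulomb Ω := by
  have key : ∀ x : E3, (∫ y in c • Ω, ‖c • x - y‖⁻¹) = c ^ 2 * ∫ y in Ω, ‖x - y‖⁻¹ := by
    intro x
    rw [setIntegral_smul_set hc Ω (fun y => ‖c • x - y‖⁻¹)]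
    have h : ∀ y : E3, ‖c • x - c • y‖⁻¹ = c⁻¹ * ‖x - y‖⁻¹ := by
      intro y
      rw [← smul_sub, norm_smul, Real.norm_eq_abs, abs_of_pos hc, mul_inv]
    simp_rw [h, MeasureTheory.integral_const_mul]
    field_simp
  unfold coulomb
  rw [setIntegral_smul_set hc Ω (fun x => ∫ y in c • Ω, ‖x - y‖⁻¹)]
  simp_rw [key, MeasureTheory.integral_const_mul]
  ring

lemma perSet_smul_aux {c : ℝ} (hc : 0 < c) (Ω : Set E3) :
    ∀ p ∈ perSet 3 (c • Ω), c⁻¹ ^ 2 * p ∈ perSet 3 Ω := by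
  rintro p ⟨F, hF, hFc, hFn, rfl⟩
  refine ⟨fun x => F (c • x), hF.comp (contDiff_id.const_smul c), hFc.comp_smul hc.ne',
    fun x => hFn _, ?_⟩
  have hdiv : ∀ x : E3,
      (∑ i, fderiv ℝ (fun x => F (c • x)) x (EuclideanSpace.single i (1:ℝ)) i)
      = c * ∑ i, fderiv ℝ F (c • x) (EuclideanSpace.single i (1:ℝ)) i := by
    intro x
    have hg : HasFDerivAt (fun x : E3 => c • x) (c • ContinuousLinearMap.id ℝ E3) x :=
      (hasFDerivAt_id x).const_smul c
    have hF' : HasFDerivAt F (fderiv ℝ F (c • x)) (c • x) :=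
      ((hF.differentiable one_ne_zero) (c • x)).hasFDerivAt
    have hcomp : HasFDerivAt (fun x : E3 => F (c • x))
        ((fderiv ℝ F (c • x)).comp (c • ContinuousLinearMap.id ℝ E3)) x :=
      HasFDerivAt.comp x hF' hg
    rw [hcomp.fderiv, Finset.mul_sum]
    congr 1
    ext i
    simp [ContinuousLinearMap.comp_apply, ContinuousLinearMap.smul_apply, _root_.map_smul]
  simp_rw [hdiv, MeasureTheory.integral_const_mul,
    setIntegral_smul_set hc Ω (fun x => ∑ i, fderiv ℝ F x (EuclideanSpace.single i (1:ℝ)) i)]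
  field_simp

lemma perSet_smul {c : ℝ} (hc : 0 < c) (Ω : Set E3) :
    perSet 3 (c • Ω) = (c ^ 2) • perSet 3 Ω := by
  ext p
  constructor
  · intro hp
    refine ⟨c⁻¹ ^ 2 * p, perSet_smul_aux hc Ω p hp, ?_⟩
    simp only [smul_eq_mul]
    field_simp
  · rintro ⟨q, hq, rfl⟩
    have h := perSet_smul_aux (inv_pos.2 hc) (c • Ω) q
    rw [inv_smul_smul₀ hc.ne' Ω] at h
    simpa [inv_inv, smul_eq_mul] using h hq

lemma perimeter_smul {c : ℝ} (hc : 0 < c) (Ω : Set E3) :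
    perimeter 3 (c • Ω) = c ^ 2 * perimeter 3 Ω := by
  rw [perimeter, perSet_smul hc, Real.sSup_smul_of_nonneg (by positivity), smul_eq_mul, perimeter]

lemma finitePerimeter_smul {c : ℝ} (hc : 0 < c) {Ω : Set E3} (h : FinitePerimeter 3 Ω) :
    FinitePerimeter 3 (c • Ω) := by
  rw [FinitePerimeter, perSet_smul hc]
  exact BddAbove.smul_of_nonneg h (by positivity)

lemma zero_mem_perSet (d : ℕ) (E : Set (EuclideanSpace ℝ (Fin d))) : (0:ℝ) ∈ perSet d E := by
  refine ⟨fun _ => 0, contDiff_const, ?_, fun x => by simp, by simp⟩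
  simp [HasCompactSupport, tsupport, Function.support]

lemma ldEnergy_nonneg {Ω : Set E3} (h : FinitePerimeter 3 Ω) : 0 ≤ ldEnergy Ω := by
  have h1 : (0:ℝ) ≤ perimeter 3 Ω := le_csSup h (zero_mem_perSet 3 Ω)
  have h2 : (0:ℝ) ≤ coulomb Ω := by
    apply mul_nonneg (by norm_num)
    apply MeasureTheory.integral_nonneg
    intro x
    apply MeasureTheory.integral_nonneg
    intro y
    positivity
  unfold ldEnergy; linarith

end VirialAux

open scoped Pointwise


/-- the virial relation at a local minimum of the energy per particle. -/
theorem virial (A0 : ℝ) (hA0 : 0 < A0) (Ω0 : Set E3)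
    (hm : MeasurableSet Ω0) (hfp : FinitePerimeter 3 Ω0)
    (hvol : volume Ω0 = ENNReal.ofReal A0) (hmin : ldEnergy Ω0 = ldE A0)
    (hloc : ∃ ε : ℝ, 0 < ε ∧ ∀ A : ℝ, 0 < A → |A - A0| < ε →
      ldE A0 / A0 ≤ ldE A / A) :
    perimeter 3 Ω0 = 2 * coulomb Ω0 := by
  classical
  obtain ⟨ε, hε, hloc⟩ := hloc
  set P := perimeter 3 Ω0 with hP
  set D := coulomb Ω0 with hD
  have hE0 : ldE A0 = P + D := by rw [← hmin]; rfl
  have key : ∀ c : ℝ, 0 < c → |c ^ 3 * A0 - A0| < ε → P + D ≤ c⁻¹ * P + c ^ 2 * D := by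
    intro c hc hnear
    have hA : 0 < c ^ 3 * A0 := by positivity
    have hbdd : BddBelow {e | ∃ Ω : Set E3, MeasurableSet Ω ∧ FinitePerimeter 3 Ω ∧
        volume Ω = ENNReal.ofReal (c ^ 3 * A0) ∧ e = ldEnergy Ω} := by
      refine ⟨0, ?_⟩
      rintro e ⟨Ω, -, hΩfp, -, rfl⟩
      exact ldEnergy_nonneg hΩfp
    have hmem : c ^ 2 * P + c ^ 5 * D ∈ {e | ∃ Ω : Set E3, MeasurableSet Ω ∧
        FinitePerimeter 3 Ω ∧ volume Ω = ENNReal.ofReal (c ^ 3 * A0) ∧ e = ldEnergy Ω} := by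
      refine ⟨c • Ω0, hm.const_smul₀ c, finitePerimeter_smul hc hfp,
        volume_smul_set hc Ω0 hvol, ?_⟩
      rw [ldEnergy, perimeter_smul hc, coulomb_smul hc]
    have h1 : ldE (c ^ 3 * A0) ≤ c ^ 2 * P + c ^ 5 * D := csInf_le hbdd hmem
    have h2 := hloc _ hA hnear
    rw [hE0] at h2
    have h3 : (P + D) / A0 ≤ (c ^ 2 * P + c ^ 5 * D) / (c ^ 3 * A0) :=
      h2.trans (by gcongr)
    have h4 : (c ^ 2 * P + c ^ 5 * D) / (c ^ 3 * A0) = (c⁻¹ * P + c ^ 2 * D) / A0 := by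
      field_simp
    rw [h4] at h3
    have h5 := mul_le_mul_of_nonneg_right h3 hA0.le
    rwa [div_mul_cancel₀ _ hA0.ne', div_mul_cancel₀ _ hA0.ne'] at h5
  have hev : ∀ᶠ t in 𝓝 (1:ℝ), (1:ℝ)⁻¹ * P + 1 ^ 2 * D ≤ t⁻¹ * P + t ^ 2 * D := by
    have hcont : Tendsto (fun t : ℝ => |t ^ 3 * A0 - A0|) (𝓝 1) (𝓝 0) := by
      have h : ContinuousAt (fun t : ℝ => |t ^ 3 * A0 - A0|) 1 := by fun_prop
      simpa using h.tendsto
    have h2 : ∀ᶠ t in 𝓝 (1:ℝ), |t ^ 3 * A0 - A0| < ε := hcont.eventually (gt_mem_nhds hε)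
    have h3 : ∀ᶠ t in 𝓝 (1:ℝ), (0:ℝ) < t := eventually_gt_nhds (by norm_num)
    filter_upwards [h2, h3] with t ht hpos
    have := key t hpos ht
    norm_num
    linarith
  have hlm : IsLocalMin (fun t : ℝ => t⁻¹ * P + t ^ 2 * D) 1 := hev
  have hd : HasDerivAt (fun t : ℝ => t⁻¹ * P + t ^ 2 * D) (-P + 2 * D) 1 := by
    have h1 : HasDerivAt (fun t : ℝ => t⁻¹) (-1) 1 := by
      simpa using hasDerivAt_inv (one_ne_zero : (1:ℝ) ≠ 0)
    have h2 : HasDerivAt (fun t : ℝ => t ^ 2) 2 1 := by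
      simpa using hasDerivAt_pow 2 (1:ℝ)
    have : HasDerivAt (fun t : ℝ => t⁻¹ * P + t ^ 2 * D) (-1 * P + 2 * D) 1 :=
      (h1.mul_const P).add (h2.mul_const D)
    convert this using 1
    ring
  have hz := hlm.deriv_eq_zero
  rw [hd.deriv] at hz
  linarith
end
end

section
/- Let λ > 0 and define f(θ) = θ^{2/3} + (1−θ)^{2/3} + λ(θ^{5/3} + (1−θ)^{5/3}) for θ ∈ [0,1]. Then f(θ) ≥ min{f(0), f(1/2), f(1)} for all θ ∈ [0,1], with strict inequality unless θ ∈ {0, 1/2, 1}. -/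
open MeasureTheory Filter Metric Set Topology

noncomputable section

lemma psi_pos' (c s : ℝ) (hc3 : c^3 = 2) (hc1 : 1 < c) (hc2 : c < 2)
    (hs1 : 1 < s) (hs2 : s < c^2) :
    0 < -2*(c-1)*s^6 + (7*c-4)*s^3 - 9*c*s + (4*c+2) := by
  have hfact : -2*(c-1)*s^6 + (7*c-4)*s^3 - 9*c*s + (4*c+2)
      = (s-1)^2 * (c^2 - s) *
        ((c + 2*c^2) + (2+2*c)*s + (2*c*(2-c))*s^2 + (2*c-2)*s^3) := by
    linear_combination (2*c*s^4 - 4*c*s^3 + 4*c*s - 2*c - 2*s^5 + 4*s^3 - s^2 - 1) * hc3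
  rw [hfact]
  have hs0 : (0:ℝ) < s := by linarith
  have h1 : (0:ℝ) < (s-1)^2 := pow_pos (by linarith) 2
  have h2 : (0:ℝ) < c^2 - s := by linarith
  have h3 : (0:ℝ) < (c + 2*c^2) + (2+2*c)*s + (2*c*(2-c))*s^2 + (2*c-2)*s^3 := by
    have t1 : (0:ℝ) < c + 2*c^2 := by nlinarith
    have t2 : (0:ℝ) < (2+2*c)*s := by nlinarith
    have t3 : (0:ℝ) ≤ (2*c*(2-c))*s^2 := by nlinarith [sq_nonneg s]
    have t4 : (0:ℝ) < (2*c-2)*s^3 := by nlinarith [pow_pos hs0 3]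
    linarith
  positivity

lemma key' (c u v : ℝ) (hc3 : c^3 = 2) (hc1 : 1 < c) (hc2 : c < 2)
    (hu : 0 < u) (hv : 0 < v) (huv : u^3 + v^3 = 1) (hne : u ≠ v) :
    c < 2*(c-1)*(u^5+v^5) + (2-c)*(u^2+v^2) := by
  have hs0 : 0 < u + v := by linarith
  have hd : (0:ℝ) < (u - v)^2 := by
    have := sub_ne_zero.mpr hne
    positivity
  have hs1 : 1 < u + v := by
    have hcube : (1:ℝ)^3 < (u+v)^3 := by nlinarith [mul_pos (mul_pos hu hv) hs0]
    exact lt_of_pow_lt_pow_left₀ 3 hs0.le hcube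
  have hmid : 1 - u*v*(u+v) = (u-v)^2*(u+v) := by linear_combination -huv
  have hmlt : u*v*(u+v) < 1 := by nlinarith [mul_pos hd hs0]
  have hs2 : u + v < c^2 := by
    have h3 : (u+v)^3 < (c^2)^3 := by nlinarith [hmlt, hc3]
    exact lt_of_pow_lt_pow_left₀ 3 (by positivity) h3
  have hpsi := psi_pos' c (u+v) hc3 hc1 hc2 hs1 hs2
  have h9 : 9*(u+v)*(2*(c-1)*(u^5+v^5) + (2-c)*(u^2+v^2) - c)
      = -2*(c-1)*(u+v)^6 + (7*c-4)*(u+v)^3 - 9*c*(u+v) + (4*c+2) := by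
    linear_combination (-30*(c-1)*(u+v)*(u*v) + 20*(c-1)*(u+v)^3 + 4*c + 2) * huv
  have hpos : 0 < 9*(u+v)*(2*(c-1)*(u^5+v^5) + (2-c)*(u^2+v^2) - c) := by
    rw [h9]; exact hpsi
  nlinarith [hpos, hs0]


lemma cbrt2_bounds (c : ℝ) (hc0 : 0 < c) (hc3 : c^3 = 2) : 1 < c ∧ c < 2 := by
  constructor
  · nlinarith [hc3, hc0, mul_pos hc0 hc0, sq_nonneg (c-1), sq_nonneg (c+1)]
  · nlinarith [hc3, hc0, mul_pos hc0 hc0, sq_nonneg (c-2), sq_nonneg (c+2)]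

lemma half_case (c u v lam : ℝ) (hc3 : c^3 = 2) (hc1 : 1 < c) (hc2 : c < 2)
    (hu : 0 < u) (hv : 0 < v) (hu1 : u < 1) (hv1 : v < 1)
    (huv : u^3 + v^3 = 1) (hne : u ≠ v) (hlam : 0 < lam)
    (hcase : u^2+v^2-1 ≤ lam*(1-(u^5+v^5))) :
    c - (u^2+v^2) < lam*(u^5+v^5-c/2) := by
  have hk := key' c u v hc3 hc1 hc2 hu hv huv hne
  have hB : u^5 + v^5 < 1 := by
    have e1 : u^5 < u^3 := by
      have h2 : (0:ℝ) < 1 - u^2 := by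
        nlinarith [mul_pos (show (0:ℝ) < 1-u by linarith) (show (0:ℝ) < 1+u by linarith)]
      nlinarith [mul_pos (pow_pos hu 3) h2]
    have e2 : v^5 < v^3 := by
      have h2 : (0:ℝ) < 1 - v^2 := by
        nlinarith [mul_pos (show (0:ℝ) < 1-v by linarith) (show (0:ℝ) < 1+v by linarith)]
      nlinarith [mul_pos (pow_pos hv 3) h2]
    linarith [huv, e1, e2]
  have hcube : (u^2+v^2)^3 ≤ 2*(u^3+v^3)^2 := by
    nlinarith [mul_nonneg (sq_nonneg (u-v))
      (show (0:ℝ) ≤ u^4+2*u^3*v+2*u*v^3+v^4 by positivity)]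
  have hpc : u^2 + v^2 ≤ c := by
    by_contra h
    push_neg at h
    have h3 : c^3 < (u^2+v^2)^3 := by
      apply pow_lt_pow_left₀ h (by linarith : (0:ℝ) ≤ c)
      norm_num
    nlinarith [hcube, huv, hc3]
  have hD : c/2 < u^5 + v^5 := by
    nlinarith [hk, mul_nonneg (by linarith : (0:ℝ) ≤ 2-c)
      (by linarith : (0:ℝ) ≤ c - (u^2+v^2)), hc1]
  have hADCB : (c-(u^2+v^2))*(1-(u^5+v^5)) < (u^2+v^2-1)*(u^5+v^5-c/2) := by
    nlinarith [hk]
  have hmul1 : (u^2+v^2-1)*(u^5+v^5-c/2) ≤ (lam*(1-(u^5+v^5)))*(u^5+v^5-c/2) :=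
    mul_le_mul_of_nonneg_right hcase (by linarith)
  by_contra h
  push_neg at h
  have hmul2 : (lam*(u^5+v^5-c/2))*(1-(u^5+v^5)) ≤ (c-(u^2+v^2))*(1-(u^5+v^5)) :=
    mul_le_mul_of_nonneg_right h (by linarith)
  nlinarith [hADCB, hmul1, hmul2]

set_option maxHeartbeats 1000000 in
/-- the one-variable dissociation lemma. -/
theorem dissociation_lemma (lam : ℝ) (hlam : 0 < lam) (f : ℝ → ℝ)
    (hf : ∀ t : ℝ, f t = t ^ ((2:ℝ)/3) + (1 - t) ^ ((2:ℝ)/3) +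
      lam * (t ^ ((5:ℝ)/3) + (1 - t) ^ ((5:ℝ)/3))) :
    ∀ θ ∈ Icc (0:ℝ) 1,
      min (min (f 0) (f (1/2))) (f 1) ≤ f θ ∧
        (θ ≠ 0 → θ ≠ 1/2 → θ ≠ 1 → min (min (f 0) (f (1/2))) (f 1) < f θ) := by
  intro θ hθIcc
  obtain ⟨hθ0', hθ1'⟩ := hθIcc
  set c : ℝ := (2:ℝ) ^ ((1:ℝ)/3) with hcdef
  clear_value c
  have hc0 : (0:ℝ) < c := by rw [hcdef]; exact Real.rpow_pos_of_pos (by norm_num) _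
  have hc3 : c^3 = 2 := by
    rw [hcdef]; rw [← Real.rpow_natCast ((2:ℝ) ^ ((1:ℝ)/3)) 3, ← Real.rpow_mul (by norm_num : (0:ℝ) ≤ 2)]
    norm_num
  obtain ⟨hc1, hc2⟩ := cbrt2_bounds c hc0 hc3
  -- values at special points
  have hf0 : f 0 = 1 + lam := by
    rw [hf]
    rw [Real.zero_rpow (by norm_num : ((2:ℝ)/3) ≠ 0),
        Real.zero_rpow (by norm_num : ((5:ℝ)/3) ≠ 0)]
    norm_num
  have hf1 : f 1 = 1 + lam := by
    have h11 : (1:ℝ) - 1 = 0 := by norm_num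
    rw [hf, h11, Real.one_rpow, Real.one_rpow,
        Real.zero_rpow (by norm_num : ((2:ℝ)/3) ≠ 0),
        Real.zero_rpow (by norm_num : ((5:ℝ)/3) ≠ 0)]
    ring
  have e23 : ((1:ℝ)/2) ^ ((2:ℝ)/3) = c/2 := by
    have e1 : ((1:ℝ)/2) ^ ((2:ℝ)/3) = (2:ℝ) ^ (-((2:ℝ)/3)) := by
      rw [one_div, ← Real.rpow_neg_one (2:ℝ), ← Real.rpow_mul (by norm_num : (0:ℝ) ≤ 2)]
      norm_num
    rw [e1, show -((2:ℝ)/3) = 1/3 + (-1) by norm_num,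
        Real.rpow_add (by norm_num : (0:ℝ) < 2), Real.rpow_neg_one]
    rw [hcdef]; ring
  have e53 : ((1:ℝ)/2) ^ ((5:ℝ)/3) = c/4 := by
    have e1 : ((1:ℝ)/2) ^ ((5:ℝ)/3) = (2:ℝ) ^ (-((5:ℝ)/3)) := by
      rw [one_div, ← Real.rpow_neg_one (2:ℝ), ← Real.rpow_mul (by norm_num : (0:ℝ) ≤ 2)]
      norm_num
    have e2 : (2:ℝ) ^ ((-2:ℤ):ℝ) = 1/4 := by
      rw [Real.rpow_intCast]; norm_num
    rw [e1, show -((5:ℝ)/3) = 1/3 + ((-2:ℤ):ℝ) by norm_num,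
        Real.rpow_add (by norm_num : (0:ℝ) < 2), e2]
    rw [hcdef]; ring
  have hfhalf : f (1/2) = c + lam * (c/2) := by
    have h12 : (1:ℝ) - 1/2 = 1/2 := by norm_num
    rw [hf, h12, e23, e53]
    ring
  have hm0 : min (min (f 0) (f (1/2))) (f 1) ≤ f 0 :=
    le_trans (min_le_left _ _) (min_le_left _ _)
  have hmh : min (min (f 0) (f (1/2))) (f 1) ≤ f (1/2) :=
    le_trans (min_le_left _ _) (min_le_right _ _)
  have hm1 : min (min (f 0) (f (1/2))) (f 1) ≤ f 1 := min_le_right _ _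
  by_cases h0 : θ = 0
  · subst h0; exact ⟨hm0, fun h _ _ => absurd rfl h⟩
  by_cases hhalf : θ = 1/2
  · subst hhalf; exact ⟨hmh, fun _ h _ => absurd rfl h⟩
  by_cases h1 : θ = 1
  · subst h1; exact ⟨hm1, fun _ _ h => absurd rfl h⟩
  -- main case
  have hθ0 : 0 < θ := lt_of_le_of_ne hθ0' (Ne.symm h0)
  have hθ1 : θ < 1 := lt_of_le_of_ne hθ1' h1
  have h1θ : 0 < 1 - θ := by linarith
  set u : ℝ := θ ^ ((1:ℝ)/3) with hudef
  set v : ℝ := (1-θ) ^ ((1:ℝ)/3) with hvdef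
  clear_value u v
  have hu : 0 < u := by rw [hudef]; exact Real.rpow_pos_of_pos hθ0 _
  have hv : 0 < v := by rw [hvdef]; exact Real.rpow_pos_of_pos h1θ _
  have hu3 : u^3 = θ := by
    rw [hudef, ← Real.rpow_natCast (θ ^ ((1:ℝ)/3)) 3, ← Real.rpow_mul hθ0.le]
    norm_num
  have hv3 : v^3 = 1-θ := by
    rw [hvdef, ← Real.rpow_natCast ((1-θ) ^ ((1:ℝ)/3)) 3, ← Real.rpow_mul h1θ.le]
    norm_num
  have huv : u^3 + v^3 = 1 := by rw [hu3, hv3]; ring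
  have hu2 : θ ^ ((2:ℝ)/3) = u^2 := by
    rw [hudef, ← Real.rpow_natCast (θ ^ ((1:ℝ)/3)) 2, ← Real.rpow_mul hθ0.le]
    norm_num
  have hv2 : (1-θ) ^ ((2:ℝ)/3) = v^2 := by
    rw [hvdef, ← Real.rpow_natCast ((1-θ) ^ ((1:ℝ)/3)) 2, ← Real.rpow_mul h1θ.le]
    norm_num
  have hu5 : θ ^ ((5:ℝ)/3) = u^5 := by
    rw [hudef, ← Real.rpow_natCast (θ ^ ((1:ℝ)/3)) 5, ← Real.rpow_mul hθ0.le]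
    norm_num
  have hv5 : (1-θ) ^ ((5:ℝ)/3) = v^5 := by
    rw [hvdef, ← Real.rpow_natCast ((1-θ) ^ ((1:ℝ)/3)) 5, ← Real.rpow_mul h1θ.le]
    norm_num
  have hfθ : f θ = u^2 + v^2 + lam*(u^5+v^5) := by
    rw [hf, hu2, hv2, hu5, hv5]
  have hne : u ≠ v := by
    intro h
    apply hhalf
    have : θ = 1 - θ := by rw [← hv3, ← hu3, h]
    linarith
  have hu1 : u < 1 := by
    rw [hudef]; exact Real.rpow_lt_one hθ0.le hθ1 (by norm_num)
  have hv1 : v < 1 := by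
    rw [hvdef]; exact Real.rpow_lt_one h1θ.le (by linarith) (by norm_num)
  rcases lt_or_ge (lam*(1-(u^5+v^5))) (u^2+v^2-1) with hcase | hcase
  · -- f 0 < f θ
    have hlt : f 0 < f θ := by
      rw [hf0, hfθ]; linarith [hcase]
    exact ⟨le_of_lt (lt_of_le_of_lt hm0 hlt), fun _ _ _ => lt_of_le_of_lt hm0 hlt⟩
  · -- f (1/2) < f θ
    have hlamD := half_case c u v lam hc3 hc1 hc2 hu hv hu1 hv1 huv hne hlam hcase
    have hlt : f (1/2) < f θ := by
      rw [hfhalf, hfθ]; linarith [hlamD]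
    exact ⟨le_of_lt (lt_of_le_of_lt hmh hlt), fun _ _ _ => lt_of_le_of_lt hmh hlt⟩
end
end
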